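/- arXiv:1807.06831 — 5 statements merged into one kernel-verified Lean document; each statement's English description precedes it below -/
import Mathlib

section
/- For every b ∈ (0,1) with b ≠ 1/2, there exists a_b > 0 such that for every a > a_b the map f_{a,b} is Li–Yorke chaotic: there exists an uncountable set S ⊆ [0,1] such that for every pair of distinct points x, y ∈ S, liminf_{n→∞} |f_{a,b}^n(x) − f_{a,b}^n(y)| = 0 and limsup_{n→∞} |f_{a,b}^n(x) − f_{a,b}^n(y)| > 0. -/
/-- The map `f_{a,b}(x) = x / (x + (1-x) * exp (a (x - b)))`. -/
noncomputable def chaosMap (a b : ℝ) : ℝ → ℝ :=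
  fun x => x / (x + (1 - x) * Real.exp (a * (x - b)))

open Real Set Filter

noncomputable def sgm (y : ℝ) : ℝ := Real.exp y / (1 + Real.exp y)

noncomputable def gmap (a b : ℝ) (y : ℝ) : ℝ := y - a * (sgm y - b)

lemma one_add_exp_pos (y : ℝ) : 0 < 1 + Real.exp y := by positivity

lemma sgm_pos (y : ℝ) : 0 < sgm y := by
  unfold sgm; positivity

lemma sgm_lt_one (y : ℝ) : sgm y < 1 := by
  unfold sgm
  rw [div_lt_one (one_add_exp_pos y)]
  linarith

lemma sgm_strictMono : StrictMono sgm := by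
  intro s t hst
  unfold sgm
  have hs := Real.exp_pos s; have ht := Real.exp_pos t
  have h := Real.exp_lt_exp.2 hst
  rw [div_lt_div_iff₀ (one_add_exp_pos s) (one_add_exp_pos t)]
  nlinarith

lemma sgm_hasDerivAt (y : ℝ) :
    HasDerivAt sgm (Real.exp y / (1 + Real.exp y) ^ 2) y := by
  have h1 : HasDerivAt (fun y : ℝ => 1 + Real.exp y) (Real.exp y) y :=
    (Real.hasDerivAt_exp y).const_add 1
  have h2 := (Real.hasDerivAt_exp y).div h1 (ne_of_gt (one_add_exp_pos y))
  exact h2.congr_deriv (by ring)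

lemma sgm_continuous : Continuous sgm :=
  Real.continuous_exp.div (continuous_const.add Real.continuous_exp)
    (fun y => ne_of_gt (one_add_exp_pos y))

lemma sgm_deriv_le_one (y : ℝ) : Real.exp y / (1 + Real.exp y) ^ 2 ≤ 1 := by
  have h := Real.exp_pos y
  rw [div_le_one (by positivity)]
  nlinarith

lemma sgm_lip (s t : ℝ) : |sgm s - sgm t| ≤ |s - t| := by
  have hmono : Monotone (fun y => y - sgm y) := by
    apply monotone_of_deriv_nonneg
    · intro y
      exact (differentiable_id.sub (fun y => (sgm_hasDerivAt y).differentiableAt)) y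
    · intro y
      have : HasDerivAt (fun y => y - sgm y) (1 - Real.exp y / (1 + Real.exp y) ^ 2) y :=
        (hasDerivAt_id y).sub (sgm_hasDerivAt y)
      rw [this.deriv]
      linarith [sgm_deriv_le_one y]
  rcases le_total s t with h | h
  · have h1 : sgm s ≤ sgm t := sgm_strictMono.monotone h
    have h2 := hmono h
    rw [abs_of_nonpos (by linarith), abs_of_nonpos (by linarith)]
    simp only at h2; linarith
  · have h1 : sgm t ≤ sgm s := sgm_strictMono.monotone h
    have h2 := hmono h
    rw [abs_of_nonneg (by linarith), abs_of_nonneg (by linarith)]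
    simp only at h2; linarith

lemma sgm_le_exp (y : ℝ) : sgm y ≤ Real.exp y := by
  unfold sgm
  rw [div_le_iff₀ (one_add_exp_pos y)]
  nlinarith [Real.exp_pos y]

lemma one_sub_sgm_le (y : ℝ) : 1 - sgm y ≤ Real.exp (-y) := by
  have h : 1 - sgm y = 1 / (1 + Real.exp y) := by
    unfold sgm; field_simp; ring
  rw [h, Real.exp_neg]
  rw [div_le_iff₀ (one_add_exp_pos y)]
  rw [inv_mul_eq_div, le_div_iff₀ (Real.exp_pos y)]
  nlinarith [Real.exp_pos y]

lemma gmap_continuous (a b : ℝ) : Continuous (gmap a b) :=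
  continuous_id.sub (continuous_const.mul (sgm_continuous.sub continuous_const))

lemma gmap_hasDerivAt (a b y : ℝ) :
    HasDerivAt (gmap a b) (1 - a * (Real.exp y / (1 + Real.exp y) ^ 2)) y := by
  exact (hasDerivAt_id y).sub (((sgm_hasDerivAt y).sub_const b).const_mul a)

lemma chaosMap_sgm (a b y : ℝ) : chaosMap a b (sgm y) = sgm (gmap a b y) := by
  unfold chaosMap gmap sgm
  have hE := Real.exp_pos y
  have hE2 := Real.exp_pos (a * (Real.exp y / (1 + Real.exp y) - b))
  rw [Real.exp_sub]
  set E := Real.exp y with hEdef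
  set D := Real.exp (a * (E / (1 + E) - b)) with hDdef
  have h1 : E / (1 + E) + (1 - E / (1 + E)) * D = (E + D) / (1 + E) := by
    field_simp
    ring
  rw [h1]
  have hED : 0 < E + D := by positivity
  have h2 : 0 < E / D + 1 := by positivity
  field_simp
  ring_nf

lemma chaosMap_iterate_sgm (a b : ℝ) (y : ℝ) (n : ℕ) :
    (chaosMap a b)^[n] (sgm y) = sgm ((gmap a b)^[n] y) := by
  induction n generalizing y with
  | zero => simp
  | succ n ih =>
      rw [Function.iterate_succ_apply, Function.iterate_succ_apply, chaosMap_sgm, ih]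

lemma covering_exact_aux {f : ℝ → ℝ} (hf : Continuous f) {u v γ δ : ℝ}
    (huv : u ≤ v) (hgd : γ ≤ δ) (hu : f u = γ) (hv : f v = δ) :
    ∃ p q, u ≤ p ∧ p ≤ q ∧ q ≤ v ∧ f '' Icc p q = Icc γ δ := by
  classical
  set Sγ : Set ℝ := Icc u v ∩ f ⁻¹' {γ} with hSγ
  have hSγc : IsCompact Sγ := isCompact_Icc.inter_right (isClosed_singleton.preimage hf)
  have hSγne : Sγ.Nonempty := ⟨u, ⟨le_refl u, huv⟩, hu⟩
  set p := sSup Sγ with hp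
  have hpmem : p ∈ Sγ := hSγc.sSup_mem hSγne
  have hpIcc : p ∈ Icc u v := hpmem.1
  have hfp : f p = γ := hpmem.2
  set Tδ : Set ℝ := Icc p v ∩ f ⁻¹' {δ} with hTδ
  have hTδc : IsCompact Tδ := isCompact_Icc.inter_right (isClosed_singleton.preimage hf)
  have hTδne : Tδ.Nonempty := ⟨v, ⟨hpIcc.2, le_refl v⟩, hv⟩
  set q := sInf Tδ with hq
  have hqmem : q ∈ Tδ := hTδc.sInf_mem hTδne
  have hqIcc : q ∈ Icc p v := hqmem.1
  have hfq : f q = δ := hqmem.2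
  refine ⟨p, q, hpIcc.1, hqIcc.1, hqIcc.2, ?_⟩
  apply Subset.antisymm
  · rintro z ⟨x, hx, rfl⟩
    constructor
    · by_contra hlt
      push_neg at hlt
      have hxp : p < x := by
        rcases lt_or_eq_of_le hx.1 with h | h
        · exact h
        · exfalso; rw [← h, hfp] at hlt; exact absurd hlt (not_lt.2 (le_refl γ))
      have : γ ∈ Icc (f x) (f q) := ⟨le_of_lt hlt, by rw [hfq]; exact hgd⟩
      obtain ⟨x', hx'1, hx'2⟩ := intermediate_value_Icc hx.2 hf.continuousOn this
      have hx'S : x' ∈ Sγ := by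
        refine ⟨⟨?_, ?_⟩, hx'2⟩
        · exact le_trans hpIcc.1 (le_trans (le_of_lt hxp) hx'1.1)
        · exact le_trans hx'1.2 hqIcc.2
      have hle : x' ≤ p := le_csSup hSγc.bddAbove hx'S
      have : p < x' := lt_of_lt_of_le hxp hx'1.1
      linarith
    · by_contra hlt
      push_neg at hlt
      have hxq : x < q := by
        rcases lt_or_eq_of_le hx.2 with h | h
        · exact h
        · exfalso; rw [h, hfq] at hlt; exact absurd hlt (not_lt.2 (le_refl δ))
      have : δ ∈ Icc (f p) (f x) := ⟨by rw [hfp]; exact hgd, le_of_lt hlt⟩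
      obtain ⟨x', hx'1, hx'2⟩ := intermediate_value_Icc hx.1 hf.continuousOn this
      have hx'T : x' ∈ Tδ := ⟨⟨hx'1.1, le_trans (le_trans hx'1.2 (le_of_lt hxq)) hqIcc.2⟩, hx'2⟩
      have hge : q ≤ x' := csInf_le hTδc.bddBelow hx'T
      have : x' < q := lt_of_le_of_lt hx'1.2 hxq
      linarith
  · have := intermediate_value_Icc hqIcc.1 hf.continuousOn
    rw [hfp, hfq] at this
    exact this

lemma covering_exact {f : ℝ → ℝ} (hf : Continuous f) {α β γ δ : ℝ}
    (hab : α ≤ β) (hgd : γ ≤ δ) (h : Icc γ δ ⊆ f '' Icc α β) :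
    ∃ p q, α ≤ p ∧ p ≤ q ∧ q ≤ β ∧ f '' Icc p q = Icc γ δ := by
  obtain ⟨u, huI, hu⟩ := h (left_mem_Icc.2 hgd)
  obtain ⟨v, hvI, hv⟩ := h (right_mem_Icc.2 hgd)
  rcases le_total u v with huv | hvu
  · obtain ⟨p, q, h1, h2, h3, h4⟩ := covering_exact_aux hf huv hgd hu hv
    exact ⟨p, q, le_trans huI.1 h1, h2, le_trans h3 hvI.2, h4⟩
  · obtain ⟨p, q, h1, h2, h3, h4⟩ := covering_exact_aux (f := fun x => f (-x))
      (hf.comp continuous_neg) (neg_le_neg hvu) hgd (by simp [hu]) (by simp [hv])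
    refine ⟨-q, -p, by linarith [hvI.1], by linarith, by linarith [huI.2], ?_⟩
    have himg : f '' Icc (-q) (-p) = (fun x => f (-x)) '' Icc p q := by
      ext z
      simp only [Set.mem_image, Set.mem_Icc]
      constructor
      · rintro ⟨w, hw, rfl⟩
        exact ⟨-w, ⟨by linarith [hw.2], by linarith [hw.1]⟩, by simp⟩
      · rintro ⟨w, hw, rfl⟩
        exact ⟨-w, ⟨by linarith [hw.2], by linarith [hw.1]⟩, rfl⟩
    rw [himg, h4]

lemma itinerary {F : ℝ → ℝ} (hF : Continuous F) (J : Bool → ℝ × ℝ)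
    (hJ : ∀ s, (J s).1 ≤ (J s).2)
    (hcov : ∀ s t : Bool, Icc (J t).1 (J t).2 ⊆ F '' Icc (J s).1 (J s).2)
    (s : ℕ → Bool) :
    ∃ x, ∀ n, F^[n] x ∈ Icc (J (s n)).1 (J (s n)).2 := by
  classical
  have step : ∀ n (p : ℝ × ℝ), p.1 ≤ p.2 →
      F^[n] '' Icc p.1 p.2 = Icc (J (s n)).1 (J (s n)).2 →
      ∃ p' : ℝ × ℝ, p.1 ≤ p'.1 ∧ p'.1 ≤ p'.2 ∧ p'.2 ≤ p.2 ∧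
        F^[n+1] '' Icc p'.1 p'.2 = Icc (J (s (n+1))).1 (J (s (n+1))).2 := by
    intro n p hple himg
    have hcover : Icc (J (s (n+1))).1 (J (s (n+1))).2 ⊆ F^[n+1] '' Icc p.1 p.2 := by
      calc Icc (J (s (n+1))).1 (J (s (n+1))).2
          ⊆ F '' Icc (J (s n)).1 (J (s n)).2 := hcov _ _
        _ = F '' (F^[n] '' Icc p.1 p.2) := by rw [himg]
        _ = F^[n+1] '' Icc p.1 p.2 := by
              rw [← Set.image_comp, ← Function.iterate_succ']
    obtain ⟨p', q', h1, h2, h3, h4⟩ := covering_exact (hF.iterate (n+1)) hple (hJ _) hcover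
    exact ⟨(p', q'), h1, h2, h3, h4⟩
  let K : ℕ → ℝ × ℝ := fun n => Nat.rec (J (s 0))
    (fun n p => if h : p.1 ≤ p.2 ∧ F^[n] '' Icc p.1 p.2 = Icc (J (s n)).1 (J (s n)).2
      then Classical.choose (step n p h.1 h.2) else p) n
  have inv : ∀ n, (K n).1 ≤ (K n).2 ∧
      F^[n] '' Icc (K n).1 (K n).2 = Icc (J (s n)).1 (J (s n)).2 := by
    intro n; induction n with
    | zero =>
        refine ⟨hJ _, ?_⟩
        show F^[0] '' Icc (J (s 0)).1 (J (s 0)).2 = _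
        simp
    | succ n ih =>
        have hKs : K (n+1) = Classical.choose (step n (K n) ih.1 ih.2) := by
          show (if h : _ ∧ _ then _ else _) = _
          rw [dif_pos ⟨ih.1, ih.2⟩]
        have hsp := Classical.choose_spec (step n (K n) ih.1 ih.2)
        rw [hKs]
        exact ⟨hsp.2.1, hsp.2.2.2⟩
  have nest : ∀ n, (K n).1 ≤ (K (n+1)).1 ∧ (K (n+1)).2 ≤ (K n).2 := by
    intro n
    have ih := inv n
    have hKs : K (n+1) = Classical.choose (step n (K n) ih.1 ih.2) := by
      show (if h : _ ∧ _ then _ else _) = _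
      rw [dif_pos ⟨ih.1, ih.2⟩]
    have hsp := Classical.choose_spec (step n (K n) ih.1 ih.2)
    rw [hKs]
    exact ⟨hsp.1, hsp.2.2.1⟩
  have lmono : Monotone (fun n => (K n).1) := monotone_nat_of_le_succ (fun n => (nest n).1)
  have rant : Antitone (fun n => (K n).2) := antitone_nat_of_succ_le (fun n => (nest n).2)
  have hbdd : BddAbove (Set.range (fun n => (K n).1)) := by
    refine ⟨(K 0).2, ?_⟩
    rintro _ ⟨n, rfl⟩
    exact le_trans (inv n).1 (rant (Nat.zero_le n))
  set x := ⨆ n, (K n).1 with hx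
  have hxmem : ∀ n, x ∈ Icc (K n).1 (K n).2 := by
    intro n
    constructor
    · exact le_ciSup hbdd n
    · refine ciSup_le (fun m => ?_)
      rcases le_total m n with h | h
      · exact le_trans (lmono h) (inv n).1
      · exact le_trans (inv m).1 (rant h)
  refine ⟨x, fun n => ?_⟩
  rw [← (inv n).2]
  exact Set.mem_image_of_mem _ (hxmem n)

noncomputable def stur (α : ℝ) (k : ℕ) : Bool :=
  decide (⌊((k : ℝ) + 1) * α⌋ = ⌊(k : ℝ) * α⌋ + 1)

noncomputable def itin (α : ℝ) (n : ℕ) : Bool :=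
  if n ≠ 0 ∧ n = 2 ^ (Nat.log 2 n) then stur α (Nat.log 2 n) else false

lemma itin_pow (α : ℝ) (k : ℕ) : itin α (2 ^ k) = stur α k := by
  unfold itin
  rw [Nat.log_pow one_lt_two]
  simp

lemma itin_not_pow (α : ℝ) {k j : ℕ} (h1 : 2 ^ k < j) (h2 : j < 2 ^ (k + 1)) :
    itin α j = false := by
  unfold itin
  rw [if_neg]
  rintro ⟨hj0, hjp⟩
  set i := Nat.log 2 j with hi
  have hik : k < i := by
    have := h1; rw [hjp] at this
    exact (Nat.pow_lt_pow_iff_right one_lt_two).1 this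
  have hik2 : i < k + 1 := by
    have := h2; rw [hjp] at this
    exact (Nat.pow_lt_pow_iff_right one_lt_two).1 this
  omega

lemma stur_step {α : ℝ} (h0 : 0 < α) (h1 : α < 1) (k : ℕ) :
    ⌊((k:ℝ) + 1) * α⌋ = ⌊(k:ℝ) * α⌋ ∨ ⌊((k:ℝ) + 1) * α⌋ = ⌊(k:ℝ) * α⌋ + 1 := by
  have hle : ⌊(k:ℝ) * α⌋ ≤ ⌊((k:ℝ) + 1) * α⌋ := Int.floor_le_floor (by nlinarith)
  have hlt : ⌊((k:ℝ) + 1) * α⌋ < ⌊(k:ℝ) * α⌋ + 2 := by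
    have h2 : ((⌊((k:ℝ) + 1) * α⌋ : ℝ)) ≤ ((k:ℝ) + 1) * α := Int.floor_le _
    have h3 : (k:ℝ) * α - 1 < ⌊(k:ℝ) * α⌋ := Int.sub_one_lt_floor _
    have : ((⌊((k:ℝ) + 1) * α⌋ : ℝ)) < (⌊(k:ℝ) * α⌋ : ℝ) + 2 := by nlinarith
    exact_mod_cast this
  omega

lemma stur_eq_floor {α α' : ℝ} (hα : α ∈ Ioo (0:ℝ) 1) (hα' : α' ∈ Ioo (0:ℝ) 1) (k : ℕ)
    (h : stur α k = stur α' k) :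
    ⌊((k:ℝ) + 1) * α⌋ - ⌊(k:ℝ) * α⌋ = ⌊((k:ℝ) + 1) * α'⌋ - ⌊(k:ℝ) * α'⌋ := by
  unfold stur at h
  rcases stur_step hα.1 hα.2 k with h1 | h1 <;> rcases stur_step hα'.1 hα'.2 k with h2 | h2 <;>
    rw [h1, h2] at h ⊢ <;> simp at h ⊢ <;> omega

lemma stur_ne_infinite {α α' : ℝ} (hα : α ∈ Ioo (0:ℝ) 1) (hα' : α' ∈ Ioo (0:ℝ) 1)
    (hne : α ≠ α') (N : ℕ) : ∃ k, N ≤ k ∧ stur α k ≠ stur α' k := by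
  by_contra hc
  push_neg at hc
  have key : ∀ m : ℕ, ⌊((N + m : ℕ) : ℝ) * α⌋ - ⌊((N + m : ℕ) : ℝ) * α'⌋ =
      ⌊((N : ℕ) : ℝ) * α⌋ - ⌊((N : ℕ) : ℝ) * α'⌋ := by
    intro m; induction m with
    | zero => simp
    | succ m ih =>
        have heq := stur_eq_floor hα hα' (N + m) (hc _ (Nat.le_add_right N m))
        have hcast : ((N + (m + 1) : ℕ) : ℝ) = ((N + m : ℕ) : ℝ) + 1 := by push_cast; ring
        have hcast2 : ((N + m : ℕ) : ℝ) = ((N + m : ℕ) : ℝ) := rfl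
        rw [hcast]
        omega
  set c : ℤ := ⌊((N : ℕ) : ℝ) * α⌋ - ⌊((N : ℕ) : ℝ) * α'⌋ with hcdef
  have hd : 0 < |α - α'| := abs_pos.2 (sub_ne_zero.2 hne)
  obtain ⟨M, hM⟩ := exists_nat_gt ((|(c : ℝ)| + 1) / |α - α'|)
  have hkey := key M
  set k : ℕ := N + M with hkdef
  have hf1 : ((k : ℝ)) * α - 1 < (⌊(k : ℝ) * α⌋ : ℝ) := Int.sub_one_lt_floor _
  have hf2 : ((⌊(k : ℝ) * α⌋ : ℝ)) ≤ (k : ℝ) * α := Int.floor_le _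
  have hf3 : ((k : ℝ)) * α' - 1 < (⌊(k : ℝ) * α'⌋ : ℝ) := Int.sub_one_lt_floor _
  have hf4 : ((⌊(k : ℝ) * α'⌋ : ℝ)) ≤ (k : ℝ) * α' := Int.floor_le _
  have hkc : ((⌊(k : ℝ) * α⌋ : ℝ)) - (⌊(k : ℝ) * α'⌋ : ℝ) = (c : ℝ) := by
    exact_mod_cast congrArg (fun z : ℤ => (z : ℝ)) hkey
  have habs : |(k : ℝ) * (α - α')| < |(c : ℝ)| + 1 := by
    rw [abs_lt]
    constructor
    · nlinarith [neg_abs_le (c : ℝ)]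
    · nlinarith [le_abs_self (c : ℝ)]
  have hklarge : ((|(c : ℝ)| + 1) / |α - α'|) < (k : ℝ) := by
    have : (M : ℝ) ≤ (k : ℝ) := by
      rw [hkdef]; push_cast; linarith [Nat.cast_nonneg (α := ℝ) N]
    linarith
  have : |(c : ℝ)| + 1 < (k : ℝ) * |α - α'| := by
    rw [div_lt_iff₀ hd] at hklarge
    linarith
  rw [abs_mul, abs_of_nonneg (Nat.cast_nonneg k)] at habs
  linarith

lemma build_S (a b : ℝ) {c₁ c₂ v₁ v₂ : ℝ}
    (hc : c₁ ≤ c₂) (hv : v₁ ≤ v₂)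
    (hgap : v₂ < c₁ ∨ c₂ < v₁)
    (hCV : Icc c₁ c₂ ∪ Icc v₁ v₂ ⊆ gmap a b '' Icc c₁ c₂)
    (hVC : Icc c₁ c₂ ⊆ gmap a b '' Icc v₁ v₂)
    (hexpC : ∀ s ∈ Icc c₁ c₂, ∀ t ∈ Icc c₁ c₂, 3 * |s - t| ≤ |gmap a b s - gmap a b t|)
    (hexpV : ∀ s ∈ Icc v₁ v₂, ∀ t ∈ Icc v₁ v₂, |s - t| / 2 ≤ |gmap a b s - gmap a b t|) :
    ∃ S : Set ℝ, S ⊆ Set.Icc (0 : ℝ) 1 ∧ ¬ S.Countable ∧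
      ∀ x ∈ S, ∀ y ∈ S, x ≠ y →
        Filter.liminf
          (fun n : ℕ => |(chaosMap a b)^[n] x - (chaosMap a b)^[n] y|)
          Filter.atTop = 0 ∧
        0 < Filter.limsup
          (fun n : ℕ => |(chaosMap a b)^[n] x - (chaosMap a b)^[n] y|)
          Filter.atTop := by
  classical
  set g : ℝ → ℝ := gmap a b with hgdef
  have hg : Continuous g := gmap_continuous a b
  -- the two branch intervals
  obtain ⟨a₁, a₂, hA1, hA12, hA2, hAimg⟩ :=
    covering_exact hg hc hc (fun z hz => hCV (Or.inl hz))
  obtain ⟨b₁, b₂, hB1, hB12, hB2, hBimg⟩ :=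
    covering_exact hg hc hv (fun z hz => hCV (Or.inr hz))
  have hAC : Icc a₁ a₂ ⊆ Icc c₁ c₂ := Icc_subset_Icc hA1 hA2
  have hBC : Icc b₁ b₂ ⊆ Icc c₁ c₂ := Icc_subset_Icc hB1 hB2
  have hCVdisj : ∀ z : ℝ, z ∈ Icc c₁ c₂ → z ∈ Icc v₁ v₂ → False := by
    intro z hz1 hz2
    rcases hgap with h | h
    · have := hz1.1; have := hz2.2; linarith
    · have := hz1.2; have := hz2.1; linarith
  have hABdisj : ∀ z : ℝ, z ∈ Icc a₁ a₂ → z ∈ Icc b₁ b₂ → False := by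
    intro z hza hzb
    have h1 : g z ∈ Icc c₁ c₂ := hAimg ▸ mem_image_of_mem g hza
    have h2 : g z ∈ Icc v₁ v₂ := hBimg ▸ mem_image_of_mem g hzb
    exact hCVdisj _ h1 h2
  set J : Bool → ℝ × ℝ := fun t => if t then (b₁, b₂) else (a₁, a₂) with hJdef
  have hJle : ∀ t, (J t).1 ≤ (J t).2 := by intro t; cases t <;> simpa [J]
  have hJC : ∀ t, Icc (J t).1 (J t).2 ⊆ Icc c₁ c₂ := by
    intro t; cases t <;> simpa [J]
  set F : ℝ → ℝ := g^[2] with hFdef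
  have hF : Continuous F := hg.iterate 2
  have hFim : ∀ s : Set ℝ, F '' s = g '' (g '' s) := by
    intro s
    rw [hFdef, show g^[2] = g ∘ g from funext (fun x => rfl), Set.image_comp]
  have hFit : ∀ (x : ℝ) (n : ℕ), F^[n] x = g^[2 * n] x := by
    intro x n
    rw [hFdef, ← Function.iterate_mul]
  have hcovJ : ∀ s t : Bool, Icc (J t).1 (J t).2 ⊆ F '' Icc (J s).1 (J s).2 := by
    intro s t
    cases s
    · show Icc (J t).1 (J t).2 ⊆ F '' Icc a₁ a₂
      rw [hFim, hAimg]
      exact fun z hz => hCV (Or.inl (hJC t hz))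
    · show Icc (J t).1 (J t).2 ⊆ F '' Icc b₁ b₂
      rw [hFim, hBimg]
      exact fun z hz => hVC (hJC t hz)
  -- per-step expansion
  have stepexp : ∀ t : Bool, ∀ u ∈ Icc (J t).1 (J t).2, ∀ v ∈ Icc (J t).1 (J t).2,
      (3/2) * |u - v| ≤ |F u - F v| := by
    intro t u hu v hv
    have hFu : ∀ w, F w = g (g w) := fun w => rfl
    cases t
    · have huA : u ∈ Icc a₁ a₂ := hu
      have hvA : v ∈ Icc a₁ a₂ := hv
      have h1 : 3 * |u - v| ≤ |g u - g v| := hexpC _ (hAC huA) _ (hAC hvA)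
      have hgu : g u ∈ Icc c₁ c₂ := hAimg ▸ mem_image_of_mem g huA
      have hgv : g v ∈ Icc c₁ c₂ := hAimg ▸ mem_image_of_mem g hvA
      have h2 : 3 * |g u - g v| ≤ |g (g u) - g (g v)| := hexpC _ hgu _ hgv
      rw [hFu u, hFu v]
      have := abs_nonneg (u - v)
      linarith
    · have huB : u ∈ Icc b₁ b₂ := hu
      have hvB : v ∈ Icc b₁ b₂ := hv
      have h1 : 3 * |u - v| ≤ |g u - g v| := hexpC _ (hBC huB) _ (hBC hvB)
      have hgu : g u ∈ Icc v₁ v₂ := hBimg ▸ mem_image_of_mem g huB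
      have hgv : g v ∈ Icc v₁ v₂ := hBimg ▸ mem_image_of_mem g hvB
      have h2 : |g u - g v| / 2 ≤ |g (g u) - g (g v)| := hexpV _ hgu _ hgv
      rw [hFu u, hFu v]
      have := abs_nonneg (u - v)
      linarith
  -- agreement implies closeness
  have agree : ∀ (x y : ℝ) (sx sy : ℕ → Bool),
      (∀ j, F^[j] x ∈ Icc (J (sx j)).1 (J (sx j)).2) →
      (∀ j, F^[j] y ∈ Icc (J (sy j)).1 (J (sy j)).2) →
      ∀ (m n : ℕ), (∀ j, n ≤ j → j < n + m → sx j = sy j) →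
      |F^[n] x - F^[n] y| ≤ (2/3 : ℝ)^m * (c₂ - c₁) := by
    intro x y sx sy hx hy m
    induction m with
    | zero =>
        intro n _
        have h1 := hJC _ (hx n)
        have h2 := hJC _ (hy n)
        simp only [pow_zero, one_mul]
        rw [abs_sub_le_iff]
        constructor <;> [linarith [h1.2, h2.1]; linarith [h1.1, h2.2]]
    | succ m ih =>
        intro n hagree
        have hsame : sx n = sy n := hagree n le_rfl (by omega)
        have hu := hx n
        have hv := hy n
        rw [hsame] at hu
        have hstep := stepexp (sy n) _ hu _ hv
        have hnext : |F^[n+1] x - F^[n+1] y| ≤ (2/3 : ℝ)^m * (c₂ - c₁) :=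
          ih (n+1) (fun j h1 h2 => hagree j (by omega) (by omega))
        rw [Function.iterate_succ_apply', Function.iterate_succ_apply'] at hnext
        calc |F^[n] x - F^[n] y| ≤ (2/3) * |F (F^[n] x) - F (F^[n] y)| := by linarith
          _ ≤ (2/3) * ((2/3 : ℝ)^m * (c₂ - c₁)) := by
              have : (0:ℝ) ≤ 2/3 := by norm_num
              nlinarith [hnext]
          _ = (2/3 : ℝ)^(m+1) * (c₂ - c₁) := by ring
  -- separation at differing symbols
  have sep : ∀ (x y : ℝ) (sx sy : ℕ → Bool),
      (∀ j, F^[j] x ∈ Icc (J (sx j)).1 (J (sx j)).2) →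
      (∀ j, F^[j] y ∈ Icc (J (sy j)).1 (J (sy j)).2) →
      ∀ n, sx n ≠ sy n →
      (g (F^[n] x) ∈ Icc c₁ c₂ ∧ g (F^[n] y) ∈ Icc v₁ v₂) ∨
      (g (F^[n] x) ∈ Icc v₁ v₂ ∧ g (F^[n] y) ∈ Icc c₁ c₂) := by
    intro x y sx sy hx hy n hne
    have hu := hx n; have hv := hy n
    cases hsx : sx n <;> cases hsy : sy n
    · exact absurd (hsx.trans hsy.symm) hne
    · rw [hsx] at hu; rw [hsy] at hv
      exact Or.inl ⟨hAimg ▸ mem_image_of_mem g hu, hBimg ▸ mem_image_of_mem g hv⟩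
    · rw [hsx] at hu; rw [hsy] at hv
      exact Or.inr ⟨hBimg ▸ mem_image_of_mem g hu, hAimg ▸ mem_image_of_mem g hv⟩
    · exact absurd (hsx.trans hsy.symm) hne
  -- the sigmoid gap
  obtain ⟨ρ, hρpos, hρ⟩ : ∃ ρ > 0, ∀ p ∈ Icc c₁ c₂, ∀ q ∈ Icc v₁ v₂,
      ρ ≤ |sgm p - sgm q| := by
    rcases hgap with h | h
    · refine ⟨sgm c₁ - sgm v₂, by linarith [sgm_strictMono h], fun p hp q hq => ?_⟩
      have h1 : sgm c₁ ≤ sgm p := sgm_strictMono.monotone hp.1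
      have h2 : sgm q ≤ sgm v₂ := sgm_strictMono.monotone hq.2
      rw [abs_of_nonneg (by linarith [sgm_strictMono h])]
      linarith [sgm_strictMono h]
    · refine ⟨sgm v₁ - sgm c₂, by linarith [sgm_strictMono h], fun p hp q hq => ?_⟩
      have h1 : sgm p ≤ sgm c₂ := sgm_strictMono.monotone hp.2
      have h2 : sgm v₁ ≤ sgm q := sgm_strictMono.monotone hq.1
      rw [abs_of_nonpos (by linarith [sgm_strictMono h])]
      linarith [sgm_strictMono h]
  -- itinerary points
  have hxpt : ∀ α : ℝ, ∃ x, ∀ n, F^[n] x ∈ Icc (J (itin α n)).1 (J (itin α n)).2 :=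
    fun α => itinerary hF J hJle hcovJ (itin α)
  choose xpt hxspec using hxpt
  -- injectivity on (0,1)
  have hinj : InjOn (fun α => sgm (xpt α)) (Ioo (0:ℝ) 1) := by
    intro α hα α' hα' heq
    by_contra hne
    have hxeq : xpt α = xpt α' := sgm_strictMono.injective heq
    obtain ⟨k, -, hk⟩ := stur_ne_infinite hα hα' hne 0
    have hdiff : itin α (2^k) ≠ itin α' (2^k) := by
      rw [itin_pow, itin_pow]; exact hk
    rcases sep _ _ _ _ (hxspec α) (hxspec α') (2^k) hdiff with ⟨h1, h2⟩ | ⟨h1, h2⟩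
    · rw [hxeq] at h1; exact hCVdisj _ h1 h2
    · rw [hxeq] at h1; exact hCVdisj _ h2 h1
  refine ⟨(fun α => sgm (xpt α)) '' Ioo (0:ℝ) 1, ?_, ?_, ?_⟩
  · rintro _ ⟨α, -, rfl⟩
    exact ⟨le_of_lt (sgm_pos _), le_of_lt (sgm_lt_one _)⟩
  · intro hcnt
    have h2 : (Ioo (0:ℝ) 1).Countable :=
      Set.countable_of_injective_of_countable_image hinj hcnt
    have h3 : Countable (Ioo (0:ℝ) 1) := Set.countable_coe_iff.2 h2
    have h4 : Cardinal.mk (Ioo (0:ℝ) 1) ≤ Cardinal.aleph0 := Cardinal.mk_le_aleph0_iff.2 h3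
    rw [Cardinal.mk_Ioo_real (by norm_num : (0:ℝ) < 1)] at h4
    exact absurd h4 (not_le.2 Cardinal.aleph0_lt_continuum)
  · rintro _ ⟨α, hα, rfl⟩ _ ⟨α', hα', rfl⟩ hxy
    have hαne : α ≠ α' := fun h => hxy (by rw [h])
    set u := xpt α with hu
    set v := xpt α' with hvv
    set h : ℕ → ℝ := fun n => |(chaosMap a b)^[n] (sgm u) - (chaosMap a b)^[n] (sgm v)| with hhdef
    have hform : ∀ n, h n = |sgm (g^[n] u) - sgm (g^[n] v)| := by
      intro n
      rw [hhdef]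
      simp only
      rw [chaosMap_iterate_sgm, chaosMap_iterate_sgm]
    have hbnd1 : ∀ n, h n ≤ 1 := by
      intro n
      rw [hform n]
      have p1 := sgm_pos (g^[n] u); have p2 := sgm_pos (g^[n] v)
      have q1 := sgm_lt_one (g^[n] u); have q2 := sgm_lt_one (g^[n] v)
      rw [abs_sub_le_iff]; constructor <;> linarith
    have hbnd0 : ∀ n, 0 ≤ h n := fun n => abs_nonneg _
    have hbddle : Filter.IsBoundedUnder (· ≤ ·) Filter.atTop h :=
      Filter.isBoundedUnder_of ⟨1, hbnd1⟩
    have hbddge : Filter.IsBoundedUnder (· ≥ ·) Filter.atTop h :=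
      Filter.isBoundedUnder_of ⟨0, hbnd0⟩
    constructor
    · -- liminf = 0
      refine le_antisymm ?_ ?_
      · -- liminf ≤ 0
        refine le_of_forall_pos_le_add (fun ε hε => ?_)
        rw [zero_add]
        refine Filter.liminf_le_of_frequently_le ?_ hbddge
        rw [Filter.frequently_atTop]
        intro N
        -- choose a long agreement block
        have hcc : (0:ℝ) ≤ c₂ - c₁ := by linarith
        obtain ⟨m₀, hm₀⟩ := exists_pow_lt_of_lt_one
          (div_pos hε (by linarith : (0:ℝ) < c₂ - c₁ + 1)) (by norm_num : (2/3:ℝ) < 1)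
        set k := max (max m₀ N) 1 with hk
        have hkm : m₀ ≤ k := le_trans (le_max_left _ _) (le_max_left _ _)
        have hkN : N ≤ k := le_trans (le_max_right m₀ N) (le_max_left _ _)
        refine ⟨2 * (2^k + 1), by nlinarith [(Nat.lt_two_pow_self (n := k))], ?_⟩
        have hagree : ∀ j, 2^k + 1 ≤ j → j < (2^k + 1) + (2^k - 1) →
            itin α j = itin α' j := by
          intro j hj1 hj2
          have hp1 : 2^k < j := by omega
          have hp2 : j < 2^(k+1) := by
            have h2k : 1 ≤ 2^k := Nat.one_le_two_pow
            rw [pow_succ]; omega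
          rw [itin_not_pow α hp1 hp2, itin_not_pow α' hp1 hp2]
        have hcl := agree _ _ _ _ (hxspec α) (hxspec α') (2^k - 1) (2^k + 1) hagree
        have h2n : h (2 * (2^k + 1)) = |F^[2^k + 1] u - F^[2^k + 1] v| → False ∨ True := fun _ => Or.inr trivial
        have heq2 : h (2 * (2^k + 1)) ≤ |F^[2^k+1] u - F^[2^k+1] v| := by
          rw [hform, hFit u (2^k+1), hFit v (2^k+1)]
          exact sgm_lip _ _
        have hmono : ((2:ℝ)/3)^(2^k - 1) ≤ (2/3 : ℝ)^m₀ := by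
          apply pow_le_pow_of_le_one (by norm_num) (by norm_num)
          have h2k : k < 2^k := (Nat.lt_two_pow_self (n := k))
          omega
        have hfin : ((2:ℝ)/3)^m₀ * (c₂ - c₁) < ε := by
          rw [lt_div_iff₀ (by linarith : (0:ℝ) < c₂ - c₁ + 1)] at hm₀
          nlinarith [pow_nonneg (by norm_num : (0:ℝ) ≤ 2/3) m₀]
        have : ((2:ℝ)/3)^(2^k-1) * (c₂ - c₁) ≤ ((2:ℝ)/3)^m₀ * (c₂ - c₁) := by
          nlinarith
        linarith
      · -- 0 ≤ liminf
        exact Filter.le_liminf_of_le (hbddle.isCoboundedUnder_ge)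
          (Filter.Eventually.of_forall hbnd0)
    · -- limsup > 0
      refine lt_of_lt_of_le hρpos ?_
      refine Filter.le_limsup_of_frequently_le ?_ hbddle
      rw [Filter.frequently_atTop]
      intro N
      obtain ⟨k, hkN, hk⟩ := stur_ne_infinite hα hα' hαne N
      have hdiff : itin α (2^k) ≠ itin α' (2^k) := by
        rw [itin_pow, itin_pow]; exact hk
      refine ⟨2 * 2^k + 1, by nlinarith [(Nat.lt_two_pow_self (n := k))], ?_⟩
      have hgit : ∀ w : ℝ, g (F^[2^k] w) = g^[2 * 2^k + 1] w := by
        intro w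
        rw [hFit w (2^k), ← Function.iterate_succ_apply' g]
      have hform2 : h (2 * 2^k + 1) = |sgm (g (F^[2^k] u)) - sgm (g (F^[2^k] v))| := by
        rw [hform, hgit u, hgit v]
      rcases sep _ _ _ _ (hxspec α) (hxspec α') (2^k) hdiff with ⟨h1, h2⟩ | ⟨h1, h2⟩
      · rw [hform2]; exact hρ _ h1 _ h2
      · rw [hform2, abs_sub_comm]; exact hρ _ h2 _ h1

lemma sgm_deriv_le_exp (y : ℝ) : Real.exp y / (1 + Real.exp y) ^ 2 ≤ Real.exp y := by
  have h := Real.exp_pos y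
  rw [div_le_iff₀ (by positivity)]
  nlinarith [sq_nonneg (Real.exp y), h]

lemma expand_of_antitone {f : ℝ → ℝ} {p q K : ℝ} (hK : 0 ≤ K)
    (hanti : AntitoneOn (fun y => f y + K * y) (Icc p q)) :
    ∀ s ∈ Icc p q, ∀ t ∈ Icc p q, K * |s - t| ≤ |f s - f t| := by
  have key : ∀ s ∈ Icc p q, ∀ t ∈ Icc p q, s ≤ t → K * (t - s) ≤ f s - f t := by
    intro s hs t ht hst
    have h := hanti hs ht hst
    simp only at h
    linarith
  intro s hs t ht
  rcases le_total s t with h | h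
  · have h1 := key s hs t ht h
    have h2 : (0:ℝ) ≤ K * (t - s) := mul_nonneg hK (by linarith)
    rw [abs_of_nonpos (by linarith : s - t ≤ 0), abs_of_nonneg (by linarith : 0 ≤ f s - f t)]
    linarith
  · have h1 := key t ht s hs h
    have h2 : (0:ℝ) ≤ K * (s - t) := mul_nonneg hK (by linarith)
    rw [abs_of_nonneg (by linarith : 0 ≤ s - t), abs_of_nonpos (by linarith : f s - f t ≤ 0)]
    linarith

lemma expand_of_monotone {f : ℝ → ℝ} {p q K : ℝ} (hK : 0 ≤ K)
    (hmono : MonotoneOn (fun y => f y - K * y) (Icc p q)) :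
    ∀ s ∈ Icc p q, ∀ t ∈ Icc p q, K * |s - t| ≤ |f s - f t| := by
  have key : ∀ s ∈ Icc p q, ∀ t ∈ Icc p q, s ≤ t → K * (t - s) ≤ f t - f s := by
    intro s hs t ht hst
    have h := hmono hs ht hst
    simp only at h
    linarith
  intro s hs t ht
  rcases le_total s t with h | h
  · have h1 := key s hs t ht h
    have h2 : (0:ℝ) ≤ K * (t - s) := mul_nonneg hK (by linarith)
    rw [abs_of_nonpos (by linarith : s - t ≤ 0), abs_of_nonpos (by linarith : f s - f t ≤ 0)]
    linarith
  · have h1 := key t ht s hs h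
    have h2 : (0:ℝ) ≤ K * (s - t) := mul_nonneg hK (by linarith)
    rw [abs_of_nonneg (by linarith : 0 ≤ s - t), abs_of_nonneg (by linarith : 0 ≤ f s - f t)]
    linarith

lemma deriv_bound4 {a u : ℝ} (ha : 0 < a) (h1 : 16 ≤ a * u) (h2 : 16 * u ≤ a) (hu : 0 < u) :
    4 ≤ a * (u / (1 + u)^2) := by
  rw [mul_div_assoc']
  rw [le_div_iff₀ (by positivity)]
  rcases le_total u 1 with h | h
  · nlinarith
  · nlinarith

lemma sgm_deriv_le_exp_neg (y : ℝ) : Real.exp y / (1 + Real.exp y) ^ 2 ≤ Real.exp (-y) := by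
  have h := Real.exp_pos y
  rw [Real.exp_neg, div_le_iff₀ (by positivity), inv_mul_eq_div, le_div_iff₀ h]
  nlinarith

set_option maxHeartbeats 2000000 in
lemma case_lt (b : ℝ) (hb0 : 0 < b) (hb12 : b < 1/2) :
    ∃ a_b : ℝ, 0 < a_b ∧ ∀ a : ℝ, a_b < a →
      ∃ S : Set ℝ, S ⊆ Set.Icc (0 : ℝ) 1 ∧ ¬ S.Countable ∧
        ∀ x ∈ S, ∀ y ∈ S, x ≠ y →
          Filter.liminf
            (fun n : ℕ => |(chaosMap a b)^[n] x - (chaosMap a b)^[n] y|)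
            Filter.atTop = 0 ∧
          0 < Filter.limsup
            (fun n : ℕ => |(chaosMap a b)^[n] x - (chaosMap a b)^[n] y|)
            Filter.atTop := by
  have h12 : 0 < 1 - 2*b := by linarith
  refine ⟨64 + (23/b)^2 + (23/(1-2*b))^2, by positivity, fun a ha => ?_⟩
  -- basic bounds on a
  have hsq1 : (0:ℝ) ≤ (23/b)^2 := sq_nonneg _
  have hsq2 : (0:ℝ) ≤ (23/(1-2*b))^2 := sq_nonneg _
  have ha64 : (64:ℝ) < a := by linarith
  have ha0 : (0:ℝ) < a := by linarith
  have ha1 : (1:ℝ) < a := by linarith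
  have hsA : Real.sqrt a * Real.sqrt a = a := Real.mul_self_sqrt (le_of_lt ha0)
  have hs8 : (8:ℝ) ≤ Real.sqrt a :=
    (Real.le_sqrt (by norm_num) (le_of_lt ha0)).2 (by nlinarith)
  have hs1 : (1:ℝ) ≤ Real.sqrt a := by linarith
  have hsb : 23/b ≤ Real.sqrt a :=
    (Real.le_sqrt (by positivity) (le_of_lt ha0)).2 (by linarith)
  have hs2b : 23/(1-2*b) ≤ Real.sqrt a :=
    (Real.le_sqrt (by positivity) (le_of_lt ha0)).2 (by linarith)
  have hloga : Real.log a ≤ 2 * Real.sqrt a - 2 := by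
    have h1 : Real.log (Real.sqrt a) ≤ Real.sqrt a - 1 :=
      Real.log_le_sub_one_of_pos (by linarith)
    have h2 : Real.log (Real.sqrt a) = Real.log a / 2 := Real.log_sqrt (le_of_lt ha0)
    linarith
  have hloga0 : 0 ≤ Real.log a := Real.log_nonneg (by linarith)
  -- the two key largeness facts
  have habkey : 3 * Real.log a + 17 ≤ a * b := by
    have h23 : 23 * Real.sqrt a ≤ a * b := by
      have h1 : (23/b) * Real.sqrt a ≤ Real.sqrt a * Real.sqrt a :=
        mul_le_mul_of_nonneg_right hsb (Real.sqrt_nonneg a)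
      rw [hsA] at h1
      have h2 : (23/b) * Real.sqrt a * b = 23 * Real.sqrt a := by field_simp
      nlinarith
    nlinarith
  have hdkey : 2 * Real.log a + 17 ≤ a * (1 - 2*b) := by
    have h23 : 23 * Real.sqrt a ≤ a * (1 - 2*b) := by
      have h1 : (23/(1-2*b)) * Real.sqrt a ≤ Real.sqrt a * Real.sqrt a :=
        mul_le_mul_of_nonneg_right hs2b (Real.sqrt_nonneg a)
      rw [hsA] at h1
      have h2 : (23/(1-2*b)) * Real.sqrt a * (1-2*b) = 23 * Real.sqrt a := by field_simp
      nlinarith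
    nlinarith
  -- the central interval and window
  set L : ℝ := Real.log a - Real.log 16 with hLdef
  have hexpL : Real.exp L = a / 16 := by
    rw [hLdef, Real.exp_sub, Real.exp_log ha0, Real.exp_log (by norm_num : (0:ℝ) < 16)]
  have hexpnL : Real.exp (-L) = 16 / a := by
    rw [Real.exp_neg, hexpL]
    field_simp
  have hlog16 : Real.log 16 ≤ Real.log a := Real.log_le_log (by norm_num) (by linarith)
  have hlog16pos : 0 < Real.log 16 := Real.log_pos (by norm_num)
  have hL1 : 1 ≤ L := by
    have h4 : Real.log 4 ≤ L := by
      rw [hLdef]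
      have : Real.log 16 + Real.log 4 = Real.log 64 := by
        rw [← Real.log_mul (by norm_num) (by norm_num)]; norm_num
      have h64 : Real.log 64 ≤ Real.log a := Real.log_le_log (by norm_num) (by linarith)
      linarith
    have he4 : Real.exp 1 ≤ 4 := by
      have := Real.exp_one_lt_d9
      linarith
    have : 1 ≤ Real.log 4 := by
      have := Real.log_le_log (Real.exp_pos 1) he4
      rwa [Real.log_exp] at this
    linarith
  have hLloga : L ≤ Real.log a := by linarith
  -- key product bounds
  have hab3L : 3 * L + 17 ≤ a * b := by linarith
  have habexp : a^2 * Real.exp 2 ≤ Real.exp (a*b) := by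
    have h1 : 2 * Real.log a + 2 ≤ a * b := by linarith
    have h2 : Real.exp (2 * Real.log a + 2) ≤ Real.exp (a*b) := Real.exp_le_exp.2 h1
    have h3 : Real.exp (2 * Real.log a + 2) = a^2 * Real.exp 2 := by
      rw [Real.exp_add, two_mul, Real.exp_add, Real.exp_log ha0]
      ring
    linarith
  set v₁ : ℝ := -(a*b) - L - 1 with hv1def
  set v₂ : ℝ := -(a*b) + L + 1 with hv2def
  -- bound : a * exp v₂ ≤ 1/2
  have haev2 : a * Real.exp v₂ ≤ 1/2 := by
    have h1 : Real.exp v₂ = Real.exp (-(a*b)) * Real.exp L * Real.exp 1 := by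
      rw [hv2def, ← Real.exp_add, ← Real.exp_add]
    have h2 : Real.exp (a*b) * Real.exp (-(a*b)) = 1 := by
      rw [← Real.exp_add]; simp
    have he1 : (1:ℝ) ≤ Real.exp 1 := by
      have := Real.add_one_le_exp (1:ℝ); linarith
    have he2 : Real.exp 1 * Real.exp 1 = Real.exp 2 := by
      rw [← Real.exp_add]; norm_num
    have hp1 : 0 < Real.exp (-(a*b)) := Real.exp_pos _
    have hp2 : 0 < Real.exp (a*b) := Real.exp_pos _
    -- a^2 * exp 2 * exp(-(ab)) ≤ 1
    have h3 : a^2 * Real.exp 2 * Real.exp (-(a*b)) ≤ 1 := by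
      calc a^2 * Real.exp 2 * Real.exp (-(a*b)) ≤ Real.exp (a*b) * Real.exp (-(a*b)) :=
            mul_le_mul_of_nonneg_right habexp (le_of_lt hp1)
        _ = 1 := h2
    rw [h1, hexpL]
    set X := Real.exp (-(a*b)) with hXdef
    set E1 := Real.exp 1 with hE1def
    have key1 : a^2 * (E1*E1) * X ≤ 1 := by
      rw [he2]; exact h3
    have ht : (0:ℝ) ≤ a^2 * E1 * X := by positivity
    have h5 : a^2 * E1 * X * 1 ≤ a^2 * E1 * X * E1 := mul_le_mul_of_nonneg_left he1 ht
    have key2 : a^2 * E1 * X ≤ 1 := by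
      calc a^2 * E1 * X = a^2 * E1 * X * 1 := by ring
        _ ≤ a^2 * E1 * X * E1 := h5
        _ = a^2 * (E1 * E1) * X := by ring
        _ ≤ 1 := key1
    have h6 : a * (X * (a/16) * E1) = a^2 * E1 * X / 16 := by ring
    rw [h6]
    linarith
  -- interval inequalities
  have hv12 : v₁ ≤ v₂ := by linarith
  have hgap : v₂ < -L := by linarith
  have hsgm_v2_bound : a * sgm v₂ ≤ 1/2 :=
    le_trans (mul_le_mul_of_nonneg_left (sgm_le_exp v₂) (le_of_lt ha0)) haev2
  -- endpoint values of g
  have hgv1 : gmap a b v₁ ≤ -L := by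
    have e1 : gmap a b v₁ = -L - 1 - a * sgm v₁ := by
      unfold gmap; rw [hv1def]; ring
    rw [e1]
    linarith [mul_pos ha0 (sgm_pos v₁)]
  have hgv2 : L ≤ gmap a b v₂ := by
    have e2 : gmap a b v₂ = L + 1 - a * sgm v₂ := by
      unfold gmap; rw [hv2def]; ring
    rw [e2]
    linarith [hsgm_v2_bound]
  have hsgmnL : a * sgm (-L) ≤ 16 := by
    have h1 : sgm (-L) ≤ Real.exp (-L) := sgm_le_exp _
    rw [hexpnL] at h1
    have h3 := mul_le_mul_of_nonneg_left h1 (le_of_lt ha0)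
    have h4 : a * (16/a) = 16 := by field_simp
    rw [h4] at h3
    exact h3
  have hgmL : L ≤ gmap a b (-L) := by
    have e3 : gmap a b (-L) = -L - a * sgm (-L) + a * b := by
      unfold gmap; ring
    rw [e3]
    linarith [hab3L, hL1, hsgmnL]
  have hsgmL : a - 16 ≤ a * sgm L := by
    have h1 : 1 - sgm L ≤ Real.exp (-L) := one_sub_sgm_le _
    rw [hexpnL] at h1
    have h3 := mul_le_mul_of_nonneg_left h1 (le_of_lt ha0)
    have h4 : a * (16/a) = 16 := by field_simp
    rw [h4] at h3
    have h5 : a * (1 - sgm L) = a - a * sgm L := by ring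
    rw [h5] at h3
    linarith
  have hgL : gmap a b L ≤ v₁ := by
    have e4 : gmap a b L = L - a * sgm L + a * b := by
      unfold gmap; ring
    rw [e4, hv1def]
    have hd2 : 2 * L + 17 ≤ a * (1 - 2*b) := by linarith [hdkey, hLloga]
    linarith [hsgmL]
  -- covering hypotheses
  have hcc : -L ≤ L := by linarith
  have hCV : Icc (-L) L ∪ Icc v₁ v₂ ⊆ gmap a b '' Icc (-L) L := by
    have hIVT := intermediate_value_Icc' hcc (gmap_continuous a b).continuousOn
    intro z hz
    have hz' : z ∈ Icc v₁ L := by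
      rcases hz with hz | hz
      · exact ⟨by linarith [hz.1], hz.2⟩
      · exact ⟨hz.1, by linarith [hz.2]⟩
    exact hIVT ⟨le_trans hgL hz'.1, le_trans hz'.2 hgmL⟩
  have hVC : Icc (-L) L ⊆ gmap a b '' Icc v₁ v₂ := by
    have hIVT := intermediate_value_Icc hv12 (gmap_continuous a b).continuousOn
    intro z hz
    exact hIVT ⟨le_trans hgv1 hz.1, le_trans hz.2 hgv2⟩
  -- expansion on C
  have hderivC : ∀ y ∈ Icc (-L) L, 4 ≤ a * (Real.exp y / (1 + Real.exp y)^2) := by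
    intro y hy
    have hu0 : 0 < Real.exp y := Real.exp_pos y
    have hu1 : 16/a ≤ Real.exp y := by
      rw [← hexpnL]; exact Real.exp_le_exp.2 hy.1
    have hu2 : Real.exp y ≤ a/16 := by
      rw [← hexpL]; exact Real.exp_le_exp.2 hy.2
    have hau : 16 ≤ a * Real.exp y := by
      have h3 := mul_le_mul_of_nonneg_left hu1 (le_of_lt ha0)
      have h4 : a * (16/a) = 16 := by field_simp
      rw [h4] at h3; exact h3
    have hua : 16 * Real.exp y ≤ a := by
      have h3 := mul_le_mul_of_nonneg_left hu2 (by norm_num : (0:ℝ) ≤ 16)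
      have h4 : 16 * (a/16) = a := by ring
      rw [h4] at h3; exact h3
    exact deriv_bound4 ha0 hau hua hu0
  have hantiC : AntitoneOn (fun y => gmap a b y + 3*y) (Icc (-L) L) := by
    apply antitoneOn_of_deriv_nonpos (convex_Icc _ _)
    · exact ((gmap_continuous a b).add (continuous_const.mul continuous_id)).continuousOn
    · intro y hy
      exact ((gmap_hasDerivAt a b y).add
        (by simpa using (hasDerivAt_id y).const_mul (3:ℝ))).differentiableAt.differentiableWithinAt
    · intro y hy
      rw [interior_Icc] at hy
      have hD : HasDerivAt (fun y => gmap a b y + 3*y)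
          ((1 - a * (Real.exp y / (1 + Real.exp y) ^ 2)) + 3) y :=
        (gmap_hasDerivAt a b y).add (by simpa using (hasDerivAt_id y).const_mul (3:ℝ))
      rw [hD.deriv]
      have := hderivC y (Ioo_subset_Icc_self hy)
      linarith
  have hexpC := expand_of_antitone (by norm_num : (0:ℝ) ≤ 3) hantiC
  -- expansion on V
  have hmonoV : MonotoneOn (fun y => gmap a b y - (1/2)*y) (Icc v₁ v₂) := by
    apply monotoneOn_of_deriv_nonneg (convex_Icc _ _)
    · exact ((gmap_continuous a b).sub (continuous_const.mul continuous_id)).continuousOn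
    · intro y hy
      exact ((gmap_hasDerivAt a b y).sub
        (by simpa using (hasDerivAt_id y).const_mul ((1:ℝ)/2))).differentiableAt.differentiableWithinAt
    · intro y hy
      rw [interior_Icc] at hy
      have hD : HasDerivAt (fun y => gmap a b y - (1/2)*y)
          ((1 - a * (Real.exp y / (1 + Real.exp y) ^ 2)) - 1/2) y :=
        (gmap_hasDerivAt a b y).sub (by simpa using (hasDerivAt_id y).const_mul ((1:ℝ)/2))
      rw [hD.deriv]
      have h1 : Real.exp y / (1 + Real.exp y)^2 ≤ Real.exp y := sgm_deriv_le_exp y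
      have h2 : Real.exp y ≤ Real.exp v₂ := Real.exp_le_exp.2 (le_of_lt hy.2)
      have h3 : a * (Real.exp y / (1 + Real.exp y)^2) ≤ a * Real.exp v₂ := by
        apply mul_le_mul_of_nonneg_left (le_trans h1 h2) (le_of_lt ha0)
      linarith [haev2]
  have hexpV : ∀ s ∈ Icc v₁ v₂, ∀ t ∈ Icc v₁ v₂,
      |s - t| / 2 ≤ |gmap a b s - gmap a b t| := by
    intro s hs t ht
    have := expand_of_monotone (by norm_num : (0:ℝ) ≤ 1/2) hmonoV s hs t ht
    linarith
  exact build_S a b hcc hv12 (Or.inl hgap) hCV hVC hexpC hexpV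

set_option maxHeartbeats 2000000 in
lemma case_gt (b : ℝ) (hb12 : 1/2 < b) (hb1 : b < 1) :
    ∃ a_b : ℝ, 0 < a_b ∧ ∀ a : ℝ, a_b < a →
      ∃ S : Set ℝ, S ⊆ Set.Icc (0 : ℝ) 1 ∧ ¬ S.Countable ∧
        ∀ x ∈ S, ∀ y ∈ S, x ≠ y →
          Filter.liminf
            (fun n : ℕ => |(chaosMap a b)^[n] x - (chaosMap a b)^[n] y|)
            Filter.atTop = 0 ∧
          0 < Filter.limsup
            (fun n : ℕ => |(chaosMap a b)^[n] x - (chaosMap a b)^[n] y|)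
            Filter.atTop := by
  have hb0 : 0 < 1 - b := by linarith
  have h12 : 0 < 2*b - 1 := by linarith
  refine ⟨64 + (23/(1-b))^2 + (23/(2*b-1))^2, by positivity, fun a ha => ?_⟩
  have hsq1 : (0:ℝ) ≤ (23/(1-b))^2 := sq_nonneg _
  have hsq2 : (0:ℝ) ≤ (23/(2*b-1))^2 := sq_nonneg _
  have ha64 : (64:ℝ) < a := by linarith
  have ha0 : (0:ℝ) < a := by linarith
  have ha1 : (1:ℝ) < a := by linarith
  have hsA : Real.sqrt a * Real.sqrt a = a := Real.mul_self_sqrt (le_of_lt ha0)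
  have hs8 : (8:ℝ) ≤ Real.sqrt a :=
    (Real.le_sqrt (by norm_num) (le_of_lt ha0)).2 (by nlinarith)
  have hs1 : (1:ℝ) ≤ Real.sqrt a := by linarith
  have hsb : 23/(1-b) ≤ Real.sqrt a :=
    (Real.le_sqrt (by positivity) (le_of_lt ha0)).2 (by linarith)
  have hs2b : 23/(2*b-1) ≤ Real.sqrt a :=
    (Real.le_sqrt (by positivity) (le_of_lt ha0)).2 (by linarith)
  have hloga : Real.log a ≤ 2 * Real.sqrt a - 2 := by
    have h1 : Real.log (Real.sqrt a) ≤ Real.sqrt a - 1 :=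
      Real.log_le_sub_one_of_pos (by linarith)
    have h2 : Real.log (Real.sqrt a) = Real.log a / 2 := Real.log_sqrt (le_of_lt ha0)
    linarith
  have hloga0 : 0 ≤ Real.log a := Real.log_nonneg (by linarith)
  have habkey : 3 * Real.log a + 17 ≤ a * (1-b) := by
    have h23 : 23 * Real.sqrt a ≤ a * (1-b) := by
      have h1 : (23/(1-b)) * Real.sqrt a ≤ Real.sqrt a * Real.sqrt a :=
        mul_le_mul_of_nonneg_right hsb (Real.sqrt_nonneg a)
      rw [hsA] at h1
      have h2 : (23/(1-b)) * Real.sqrt a * (1-b) = 23 * Real.sqrt a := by field_simp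
      nlinarith
    nlinarith
  have hdkey : 2 * Real.log a + 17 ≤ a * (2*b-1) := by
    have h23 : 23 * Real.sqrt a ≤ a * (2*b-1) := by
      have h1 : (23/(2*b-1)) * Real.sqrt a ≤ Real.sqrt a * Real.sqrt a :=
        mul_le_mul_of_nonneg_right hs2b (Real.sqrt_nonneg a)
      rw [hsA] at h1
      have h2 : (23/(2*b-1)) * Real.sqrt a * (2*b-1) = 23 * Real.sqrt a := by field_simp
      nlinarith
    nlinarith
  set L : ℝ := Real.log a - Real.log 16 with hLdef
  have hexpL : Real.exp L = a / 16 := by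
    rw [hLdef, Real.exp_sub, Real.exp_log ha0, Real.exp_log (by norm_num : (0:ℝ) < 16)]
  have hexpnL : Real.exp (-L) = 16 / a := by
    rw [Real.exp_neg, hexpL]
    field_simp
  have hlog16 : Real.log 16 ≤ Real.log a := Real.log_le_log (by norm_num) (by linarith)
  have hlog16pos : 0 < Real.log 16 := Real.log_pos (by norm_num)
  have hL1 : 1 ≤ L := by
    have h4 : Real.log 4 ≤ L := by
      rw [hLdef]
      have : Real.log 16 + Real.log 4 = Real.log 64 := by
        rw [← Real.log_mul (by norm_num) (by norm_num)]; norm_num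
      have h64 : Real.log 64 ≤ Real.log a := Real.log_le_log (by norm_num) (by linarith)
      linarith
    have he4 : Real.exp 1 ≤ 4 := by
      have := Real.exp_one_lt_d9
      linarith
    have : 1 ≤ Real.log 4 := by
      have := Real.log_le_log (Real.exp_pos 1) he4
      rwa [Real.log_exp] at this
    linarith
  have hLloga : L ≤ Real.log a := by linarith
  have hab3L : 3 * L + 17 ≤ a * (1-b) := by linarith
  have habexp : a^2 * Real.exp 2 ≤ Real.exp (a*(1-b)) := by
    have h1 : 2 * Real.log a + 2 ≤ a * (1-b) := by linarith
    have h2 : Real.exp (2 * Real.log a + 2) ≤ Real.exp (a*(1-b)) := Real.exp_le_exp.2 h1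
    have h3 : Real.exp (2 * Real.log a + 2) = a^2 * Real.exp 2 := by
      rw [Real.exp_add, two_mul, Real.exp_add, Real.exp_log ha0]
      ring
    linarith
  set v₁ : ℝ := a*(1-b) - L - 1 with hv1def
  set v₂ : ℝ := a*(1-b) + L + 1 with hv2def
  have haev1 : a * Real.exp (-v₁) ≤ 1/2 := by
    have h1 : Real.exp (-v₁) = Real.exp (-(a*(1-b))) * Real.exp L * Real.exp 1 := by
      rw [hv1def, ← Real.exp_add, ← Real.exp_add]
      ring_nf
    have h2 : Real.exp (a*(1-b)) * Real.exp (-(a*(1-b))) = 1 := by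
      rw [← Real.exp_add]; simp
    have he1 : (1:ℝ) ≤ Real.exp 1 := by
      have := Real.add_one_le_exp (1:ℝ); linarith
    have he2 : Real.exp 1 * Real.exp 1 = Real.exp 2 := by
      rw [← Real.exp_add]; norm_num
    have hp1 : 0 < Real.exp (-(a*(1-b))) := Real.exp_pos _
    have h3 : a^2 * Real.exp 2 * Real.exp (-(a*(1-b))) ≤ 1 := by
      calc a^2 * Real.exp 2 * Real.exp (-(a*(1-b))) ≤
            Real.exp (a*(1-b)) * Real.exp (-(a*(1-b))) :=
            mul_le_mul_of_nonneg_right habexp (le_of_lt hp1)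
        _ = 1 := h2
    rw [h1, hexpL]
    set X := Real.exp (-(a*(1-b))) with hXdef
    set E1 := Real.exp 1 with hE1def
    have key1 : a^2 * (E1*E1) * X ≤ 1 := by
      rw [he2]; exact h3
    have ht : (0:ℝ) ≤ a^2 * E1 * X := by positivity
    have h5 : a^2 * E1 * X * 1 ≤ a^2 * E1 * X * E1 := mul_le_mul_of_nonneg_left he1 ht
    have key2 : a^2 * E1 * X ≤ 1 := by
      calc a^2 * E1 * X = a^2 * E1 * X * 1 := by ring
        _ ≤ a^2 * E1 * X * E1 := h5
        _ = a^2 * (E1 * E1) * X := by ring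
        _ ≤ 1 := key1
    have h6 : a * (X * (a/16) * E1) = a^2 * E1 * X / 16 := by ring
    rw [h6]
    linarith
  have hv12 : v₁ ≤ v₂ := by linarith
  have hgap : L < v₁ := by linarith
  -- endpoint values of g
  have hgv2 : L ≤ gmap a b v₂ := by
    have e2 : gmap a b v₂ = a * (1 - sgm v₂) + L + 1 := by
      unfold gmap; rw [hv2def]; ring
    rw [e2]
    have := mul_nonneg (le_of_lt ha0) (by linarith [sgm_lt_one v₂] : (0:ℝ) ≤ 1 - sgm v₂)
    linarith
  have hgv1 : gmap a b v₁ ≤ -L := by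
    have e1 : gmap a b v₁ = a * (1 - sgm v₁) - L - 1 := by
      unfold gmap; rw [hv1def]; ring
    rw [e1]
    have h1 : 1 - sgm v₁ ≤ Real.exp (-v₁) := one_sub_sgm_le _
    have h2 : a * (1 - sgm v₁) ≤ a * Real.exp (-v₁) :=
      mul_le_mul_of_nonneg_left h1 (le_of_lt ha0)
    linarith [haev1]
  have hsgmnL : a * sgm (-L) ≤ 16 := by
    have h1 : sgm (-L) ≤ Real.exp (-L) := sgm_le_exp _
    rw [hexpnL] at h1
    have h3 := mul_le_mul_of_nonneg_left h1 (le_of_lt ha0)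
    have h4 : a * (16/a) = 16 := by field_simp
    rw [h4] at h3
    exact h3
  have hgmL : v₂ ≤ gmap a b (-L) := by
    have e3 : gmap a b (-L) = -L - a * sgm (-L) + a * b := by
      unfold gmap; ring
    rw [e3, hv2def]
    have hd2 : 2 * L + 17 ≤ a * (2*b-1) := by linarith [hdkey, hLloga]
    nlinarith [hsgmnL]
  have hsgmL : a - 16 ≤ a * sgm L := by
    have h1 : 1 - sgm L ≤ Real.exp (-L) := one_sub_sgm_le _
    rw [hexpnL] at h1
    have h3 := mul_le_mul_of_nonneg_left h1 (le_of_lt ha0)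
    have h4 : a * (16/a) = 16 := by field_simp
    rw [h4] at h3
    have h5 : a * (1 - sgm L) = a - a * sgm L := by ring
    rw [h5] at h3
    linarith
  have hgL : gmap a b L ≤ -L := by
    have e4 : gmap a b L = L - a * sgm L + a * b := by
      unfold gmap; ring
    rw [e4]
    nlinarith [hsgmL, hab3L, hLloga]
  -- covering hypotheses
  have hcc : -L ≤ L := by linarith
  have hCV : Icc (-L) L ∪ Icc v₁ v₂ ⊆ gmap a b '' Icc (-L) L := by
    have hIVT := intermediate_value_Icc' hcc (gmap_continuous a b).continuousOn
    intro z hz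
    have hz' : z ∈ Icc (-L) v₂ := by
      rcases hz with hz | hz
      · exact ⟨hz.1, by linarith [hz.2]⟩
      · exact ⟨by linarith [hz.1], hz.2⟩
    exact hIVT ⟨le_trans hgL hz'.1, le_trans hz'.2 hgmL⟩
  have hVC : Icc (-L) L ⊆ gmap a b '' Icc v₁ v₂ := by
    have hIVT := intermediate_value_Icc hv12 (gmap_continuous a b).continuousOn
    intro z hz
    exact hIVT ⟨le_trans hgv1 hz.1, le_trans hz.2 hgv2⟩
  -- expansion on C
  have hderivC : ∀ y ∈ Icc (-L) L, 4 ≤ a * (Real.exp y / (1 + Real.exp y)^2) := by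
    intro y hy
    have hu0 : 0 < Real.exp y := Real.exp_pos y
    have hu1 : 16/a ≤ Real.exp y := by
      rw [← hexpnL]; exact Real.exp_le_exp.2 hy.1
    have hu2 : Real.exp y ≤ a/16 := by
      rw [← hexpL]; exact Real.exp_le_exp.2 hy.2
    have hau : 16 ≤ a * Real.exp y := by
      have h3 := mul_le_mul_of_nonneg_left hu1 (le_of_lt ha0)
      have h4 : a * (16/a) = 16 := by field_simp
      rw [h4] at h3; exact h3
    have hua : 16 * Real.exp y ≤ a := by
      have h3 := mul_le_mul_of_nonneg_left hu2 (by norm_num : (0:ℝ) ≤ 16)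
      have h4 : 16 * (a/16) = a := by ring
      rw [h4] at h3; exact h3
    exact deriv_bound4 ha0 hau hua hu0
  have hantiC : AntitoneOn (fun y => gmap a b y + 3*y) (Icc (-L) L) := by
    apply antitoneOn_of_deriv_nonpos (convex_Icc _ _)
    · exact ((gmap_continuous a b).add (continuous_const.mul continuous_id)).continuousOn
    · intro y hy
      exact ((gmap_hasDerivAt a b y).add
        (by simpa using (hasDerivAt_id y).const_mul (3:ℝ))).differentiableAt.differentiableWithinAt
    · intro y hy
      rw [interior_Icc] at hy
      have hD : HasDerivAt (fun y => gmap a b y + 3*y)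
          ((1 - a * (Real.exp y / (1 + Real.exp y) ^ 2)) + 3) y :=
        (gmap_hasDerivAt a b y).add (by simpa using (hasDerivAt_id y).const_mul (3:ℝ))
      rw [hD.deriv]
      have := hderivC y (Ioo_subset_Icc_self hy)
      linarith
  have hexpC := expand_of_antitone (by norm_num : (0:ℝ) ≤ 3) hantiC
  -- expansion on V
  have hmonoV : MonotoneOn (fun y => gmap a b y - (1/2)*y) (Icc v₁ v₂) := by
    apply monotoneOn_of_deriv_nonneg (convex_Icc _ _)
    · exact ((gmap_continuous a b).sub (continuous_const.mul continuous_id)).continuousOn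
    · intro y hy
      exact ((gmap_hasDerivAt a b y).sub
        (by simpa using (hasDerivAt_id y).const_mul ((1:ℝ)/2))).differentiableAt.differentiableWithinAt
    · intro y hy
      rw [interior_Icc] at hy
      have hD : HasDerivAt (fun y => gmap a b y - (1/2)*y)
          ((1 - a * (Real.exp y / (1 + Real.exp y) ^ 2)) - 1/2) y :=
        (gmap_hasDerivAt a b y).sub (by simpa using (hasDerivAt_id y).const_mul ((1:ℝ)/2))
      rw [hD.deriv]
      have h1 : Real.exp y / (1 + Real.exp y)^2 ≤ Real.exp (-y) := sgm_deriv_le_exp_neg y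
      have h2 : Real.exp (-y) ≤ Real.exp (-v₁) := Real.exp_le_exp.2 (by linarith [hy.1])
      have h3 : a * (Real.exp y / (1 + Real.exp y)^2) ≤ a * Real.exp (-v₁) := by
        apply mul_le_mul_of_nonneg_left (le_trans h1 h2) (le_of_lt ha0)
      linarith [haev1]
  have hexpV : ∀ s ∈ Icc v₁ v₂, ∀ t ∈ Icc v₁ v₂,
      |s - t| / 2 ≤ |gmap a b s - gmap a b t| := by
    intro s hs t ht
    have := expand_of_monotone (by norm_num : (0:ℝ) ≤ 1/2) hmonoV s hs t ht
    linarith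
  exact build_S a b hcc hv12 (Or.inr hgap) hCV hVC hexpC hexpV

/-- For every `b ∈ (0,1)` with `b ≠ 1/2` there is `a_b > 0` such that for
every `a > a_b` the map `f_{a,b}` is Li–Yorke chaotic: there is an uncountable
scrambled set `S ⊆ [0,1]`. -/
theorem stmt_14 (b : ℝ) (hb : b ∈ Set.Ioo (0 : ℝ) 1) (hb2 : b ≠ 1 / 2) :
    ∃ a_b : ℝ, 0 < a_b ∧ ∀ a : ℝ, a_b < a →
      ∃ S : Set ℝ, S ⊆ Set.Icc (0 : ℝ) 1 ∧ ¬ S.Countable ∧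
        ∀ x ∈ S, ∀ y ∈ S, x ≠ y →
          Filter.liminf
            (fun n : ℕ => |(chaosMap a b)^[n] x - (chaosMap a b)^[n] y|)
            Filter.atTop = 0 ∧
          0 < Filter.limsup
            (fun n : ℕ => |(chaosMap a b)^[n] x - (chaosMap a b)^[n] y|)
            Filter.atTop := by
  rcases lt_or_gt_of_ne hb2 with h | h
  · exact case_lt b hb.1 h
  · exact case_gt b h hb.2
end

section
/- For every a > 0 and b ∈ (0,1) there exist a positive integer N and a number κ > 1 such that for every x ∈ [0,1], the product Π_{k=0}^{N-1} λ_{a,b}(f_{a,b}^k(x)) ≥ κ. -/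
/-- The transverse eigenvalue
`λ_{a,b}(x) = (1 + a x (1-x)) exp(a(x-b)) / (x + (1-x) exp(a(x-b)))²`. -/
noncomputable def transEig (a b : ℝ) : ℝ → ℝ :=
  fun x => (1 + a * x * (1 - x)) * Real.exp (a * (x - b)) /
    (x + (1 - x) * Real.exp (a * (x - b))) ^ 2

section chaosAux

lemma den_pos {a b x : ℝ} (h0 : 0 ≤ x) (h1 : x ≤ 1) :
    0 < x + (1 - x) * Real.exp (a * (x - b)) := by
  rcases eq_or_lt_of_le h0 with h | h
  · rw [← h]; simpa using Real.exp_pos (a * (0 - b))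
  · have h2 : 0 ≤ (1 - x) * Real.exp (a * (x - b)) :=
      mul_nonneg (by linarith) (Real.exp_pos _).le
    linarith

lemma map_mem_Icc {a b x : ℝ} (hx : x ∈ Set.Icc (0:ℝ) 1) :
    chaosMap a b x ∈ Set.Icc (0:ℝ) 1 := by
  obtain ⟨h0, h1⟩ := hx
  have hD := den_pos (a := a) (b := b) h0 h1
  constructor
  · exact div_nonneg h0 hD.le
  · show x / _ ≤ 1
    rw [div_le_one hD]
    have h2 : 0 ≤ (1 - x) * Real.exp (a * (x - b)) :=
      mul_nonneg (by linarith) (Real.exp_pos _).le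
    linarith

lemma map_mem_Ioo {a b x : ℝ} (hx : x ∈ Set.Ioo (0:ℝ) 1) :
    chaosMap a b x ∈ Set.Ioo (0:ℝ) 1 := by
  obtain ⟨h0, h1⟩ := hx
  have hD := den_pos (a := a) (b := b) h0.le h1.le
  constructor
  · exact div_pos h0 hD
  · show x / _ < 1
    rw [div_lt_one hD]
    have h2 : 0 < (1 - x) * Real.exp (a * (x - b)) :=
      mul_pos (by linarith) (Real.exp_pos _)
    linarith

lemma eig_pos {a b : ℝ} (ha : 0 < a) {x : ℝ} (h0 : 0 ≤ x) (h1 : x ≤ 1) :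
    0 < transEig a b x := by
  have hD := den_pos (a := a) (b := b) h0 h1
  have hnum : 0 < 1 + a * x * (1 - x) := by nlinarith [mul_nonneg ha.le (mul_nonneg h0 (by linarith : (0:ℝ) ≤ 1 - x))]
  exact div_pos (mul_pos hnum (Real.exp_pos _)) (pow_pos hD 2)

lemma eig_id {a b x : ℝ} (h0 : 0 ≤ x) (h1 : x ≤ 1) :
    transEig a b x * (x * (1 - x)) =
      (1 + a * (x * (1 - x))) * (chaosMap a b x * (1 - chaosMap a b x)) := by
  have hD := (den_pos (a := a) (b := b) h0 h1).ne'
  unfold transEig chaosMap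
  field_simp
  ring

lemma iter_mem_Icc {a b x : ℝ} (hx : x ∈ Set.Icc (0:ℝ) 1) (k : ℕ) :
    (chaosMap a b)^[k] x ∈ Set.Icc (0:ℝ) 1 := by
  induction k with
  | zero => simpa using hx
  | succ n ih => rw [Function.iterate_succ_apply']; exact map_mem_Icc ih

lemma prod_id {a b x : ℝ} (hx : x ∈ Set.Icc (0:ℝ) 1) (n : ℕ) :
    (∏ k ∈ Finset.range n, transEig a b ((chaosMap a b)^[k] x)) * (x * (1 - x)) =
      ((chaosMap a b)^[n] x * (1 - (chaosMap a b)^[n] x)) *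
        ∏ k ∈ Finset.range n, (1 + a * ((chaosMap a b)^[k] x * (1 - (chaosMap a b)^[k] x))) := by
  induction n with
  | zero => simp [mul_comm]
  | succ n ih =>
    have hy := iter_mem_Icc (a := a) (b := b) hx n
    have hid := eig_id (a := a) (b := b) hy.1 hy.2
    rw [Finset.prod_range_succ, Finset.prod_range_succ, Function.iterate_succ_apply']
    linear_combination (transEig a b ((chaosMap a b)^[n] x)) * ih +
      (∏ k ∈ Finset.range n, (1 + a * ((chaosMap a b)^[k] x * (1 - (chaosMap a b)^[k] x)))) * hid

lemma step_lower {a b : ℝ} (ha : 0 < a) (hb1 : 0 < b) (hb2 : b < 1) {y : ℝ} (hy : y ∈ Set.Ioo (0:ℝ) 1) :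
    min y (b / (1 + Real.exp a)) ≤ chaosMap a b y := by
  obtain ⟨h0, h1⟩ := hy
  have hD := den_pos (a := a) (b := b) h0.le h1.le
  have hEpos := Real.exp_pos (a * (y - b))
  rcases le_total y b with hyb | hyb
  · refine le_trans (min_le_left _ _) ?_
    have hE1 : Real.exp (a * (y - b)) ≤ 1 := by
      rw [Real.exp_le_one_iff]
      nlinarith
    have hD1 : y + (1 - y) * Real.exp (a * (y - b)) ≤ 1 := by
      nlinarith [mul_le_of_le_one_right (by linarith : (0:ℝ) ≤ 1 - y) hE1]
    show y ≤ y / _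
    rw [le_div_iff₀ hD]
    nlinarith
  · refine le_trans (min_le_right _ _) ?_
    have hEa : Real.exp (a * (y - b)) ≤ Real.exp a := by
      apply Real.exp_le_exp.mpr
      nlinarith
    have hD1 : y + (1 - y) * Real.exp (a * (y - b)) ≤ 1 + Real.exp a := by
      nlinarith [mul_le_of_le_one_left hEpos.le (by linarith : 1 - y ≤ 1)]
    show b / (1 + Real.exp a) ≤ y / _
    rw [div_le_div_iff₀ (by positivity) hD]
    nlinarith [Real.exp_pos a]

lemma step_upper {a b : ℝ} (ha : 0 < a) (hb1 : 0 < b) (hb2 : b < 1) {y : ℝ} (hy : y ∈ Set.Ioo (0:ℝ) 1) :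
    min (1 - y) ((1 - b) * Real.exp (-a)) ≤ 1 - chaosMap a b y := by
  obtain ⟨h0, h1⟩ := hy
  have hD := den_pos (a := a) (b := b) h0.le h1.le
  have hEpos := Real.exp_pos (a * (y - b))
  rcases le_total b y with hyb | hyb
  · refine le_trans (min_le_left _ _) ?_
    have hE1 : 1 ≤ Real.exp (a * (y - b)) := by
      rw [Real.one_le_exp_iff]
      nlinarith
    have hD1 : 1 ≤ y + (1 - y) * Real.exp (a * (y - b)) := by
      nlinarith [mul_le_mul_of_nonneg_left hE1 (by linarith : (0:ℝ) ≤ 1 - y)]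
    have : chaosMap a b y ≤ y := by
      show y / _ ≤ y
      rw [div_le_iff₀ hD]
      nlinarith
    linarith
  · refine le_trans (min_le_right _ _) ?_
    have hkey : 1 - chaosMap a b y = (1 - y) * Real.exp (a * (y - b)) /
        (y + (1 - y) * Real.exp (a * (y - b))) := by
      show 1 - y / _ = _
      field_simp
      ring
    rw [hkey, le_div_iff₀ hD]
    have hE1 : Real.exp (a * (y - b)) ≤ 1 := by
      rw [Real.exp_le_one_iff]; nlinarith
    have hEl : Real.exp (-a) ≤ Real.exp (a * (y - b)) := by
      apply Real.exp_le_exp.mpr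
      nlinarith
    have hea := Real.exp_pos (-a)
    have hD1 : y + (1 - y) * Real.exp (a * (y - b)) ≤ 1 := by
      nlinarith [mul_le_of_le_one_right (by linarith : (0:ℝ) ≤ 1 - y) hE1]
    calc (1 - b) * Real.exp (-a) * (y + (1 - y) * Real.exp (a * (y - b)))
        ≤ (1 - b) * Real.exp (-a) * 1 := by
          apply mul_le_mul_of_nonneg_left hD1 (mul_nonneg (by linarith) hea.le)
      _ ≤ (1 - y) * Real.exp (a * (y - b)) := by
          rw [mul_one]
          apply mul_le_mul (by linarith) hEl hea.le (by linarith)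

lemma orbit_bounds {a b : ℝ} (ha : 0 < a) (hb1 : 0 < b) (hb2 : b < 1) {x : ℝ}
    (hx : x ∈ Set.Ioo (0:ℝ) 1) (k : ℕ) :
    (chaosMap a b)^[k] x ∈ Set.Ioo (0:ℝ) 1 ∧
      min x (b / (1 + Real.exp a)) ≤ (chaosMap a b)^[k] x ∧
      min (1 - x) ((1 - b) * Real.exp (-a)) ≤ 1 - (chaosMap a b)^[k] x := by
  induction k with
  | zero => exact ⟨hx, by simp, by simp⟩
  | succ n ih =>
    obtain ⟨hIoo, hlo, hhi⟩ := ih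
    rw [Function.iterate_succ_apply']
    exact ⟨map_mem_Ioo hIoo,
      le_trans (le_min hlo (min_le_right _ _)) (step_lower ha hb1 hb2 hIoo),
      le_trans (le_min hhi (min_le_right _ _)) (step_upper ha hb1 hb2 hIoo)⟩

lemma interior_prod {a b : ℝ} (ha : 0 < a) (hb1 : 0 < b) (hb2 : b < 1) {x : ℝ}
    (hx : x ∈ Set.Ioo (0:ℝ) 1) (n : ℕ) :
    4 * (min x (b / (1 + Real.exp a)) * min (1 - x) ((1 - b) * Real.exp (-a))) *
        (1 + a * (min x (b / (1 + Real.exp a)) * min (1 - x) ((1 - b) * Real.exp (-a)))) ^ n ≤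
      ∏ k ∈ Finset.range n, transEig a b ((chaosMap a b)^[k] x) := by
  set γ := min x (b / (1 + Real.exp a)) with hγdef
  set γ' := min (1 - x) ((1 - b) * Real.exp (-a)) with hγ'def
  have hγ : 0 < γ := lt_min hx.1 (by positivity)
  have hγ' : 0 < γ' := lt_min (by linarith [hx.2]) (mul_pos (by linarith) (Real.exp_pos _))
  have hxIcc : x ∈ Set.Icc (0:ℝ) 1 := ⟨hx.1.le, hx.2.le⟩
  have hφk : ∀ k : ℕ, γ * γ' ≤ (chaosMap a b)^[k] x * (1 - (chaosMap a b)^[k] x) := by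
    intro k
    obtain ⟨hIoo, hlo, hhi⟩ := orbit_bounds ha hb1 hb2 hx k
    exact mul_le_mul hlo hhi hγ'.le hIoo.1.le
  have hγγ' : 0 < γ * γ' := mul_pos hγ hγ'
  have hprodφ : (1 + a * (γ * γ')) ^ n ≤
      ∏ k ∈ Finset.range n, (1 + a * ((chaosMap a b)^[k] x * (1 - (chaosMap a b)^[k] x))) :=
    calc (1 + a * (γ * γ')) ^ n
        = ∏ _k ∈ Finset.range n, (1 + a * (γ * γ')) := by
          rw [Finset.prod_const, Finset.card_range]
      _ ≤ _ := Finset.prod_le_prod (fun k _ => by nlinarith)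
          (fun k _ => by nlinarith [hφk k, mul_le_mul_of_nonneg_left (hφk k) ha.le])
  have hP0 : 0 ≤ ∏ k ∈ Finset.range n, transEig a b ((chaosMap a b)^[k] x) :=
    Finset.prod_nonneg fun k _ =>
      (eig_pos ha (iter_mem_Icc hxIcc k).1 (iter_mem_Icc hxIcc k).2).le
  have hid := prod_id (a := a) (b := b) hxIcc n
  have hφx : x * (1 - x) ≤ 1 / 4 := by nlinarith [sq_nonneg (x - 1 / 2)]
  have h1 : γ * γ' * (1 + a * (γ * γ')) ^ n ≤
      ((chaosMap a b)^[n] x * (1 - (chaosMap a b)^[n] x)) *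
        ∏ k ∈ Finset.range n, (1 + a * ((chaosMap a b)^[k] x * (1 - (chaosMap a b)^[k] x))) :=
    mul_le_mul (hφk n) hprodφ (pow_nonneg (by nlinarith) n) (le_trans hγγ'.le (hφk n))
  have h2 : 4 * (γ * γ') * (1 + a * (γ * γ')) ^ n ≤
      4 * ((∏ k ∈ Finset.range n, transEig a b ((chaosMap a b)^[k] x)) * (x * (1 - x))) := by
    rw [hid]; nlinarith [h1]
  nlinarith [h2, mul_nonneg hP0 (by linarith : (0:ℝ) ≤ 1 - 4 * (x * (1 - x)))]

lemma eig_cont {a b : ℝ} : ContinuousOn (transEig a b) (Set.Icc (0:ℝ) 1) := by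
  apply ContinuousOn.div
  · fun_prop
  · fun_prop
  · intro x hx
    exact pow_ne_zero 2 (den_pos hx.1 hx.2).ne'

lemma eig_zero {a b : ℝ} : transEig a b 0 = Real.exp (a * b) := by
  unfold transEig
  rw [show a * (0 - b) = -(a * b) by ring]
  rw [Real.exp_neg]
  have h := Real.exp_pos (a * b)
  field_simp
  ring

lemma eig_one {a b : ℝ} : transEig a b 1 = Real.exp (a * (1 - b)) := by
  unfold transEig
  norm_num

lemma boundary_gain {a b : ℝ} (ha : 0 < a) (hb1 : 0 < b) (hb2 : b < 1) :
    ∃ η m₀ : ℝ, 0 < η ∧ η ≤ 1 / 2 ∧ 1 < m₀ ∧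
      ∀ y ∈ Set.Icc (0:ℝ) 1, (y < η ∨ 1 - η < y) → m₀ ≤ transEig a b y := by
  set c : ℝ := min (Real.exp (a * b)) (Real.exp (a * (1 - b))) with hc
  have hc1 : 1 < c := lt_min (Real.one_lt_exp_iff.mpr (by positivity))
    (Real.one_lt_exp_iff.mpr (by nlinarith))
  set m₀ : ℝ := (1 + c) / 2 with hm₀
  have hm₀1 : 1 < m₀ := by rw [hm₀]; linarith
  have hm₀c : m₀ < c := by rw [hm₀]; linarith
  have h0m : (0:ℝ) ∈ Set.Icc (0:ℝ) 1 := by norm_num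
  have h1m : (1:ℝ) ∈ Set.Icc (0:ℝ) 1 := by norm_num
  have hev0 : ∀ᶠ y in nhdsWithin 0 (Set.Icc (0:ℝ) 1), m₀ < transEig a b y :=
    (eig_cont 0 h0m).eventually (eventually_gt_nhds (by
      rw [eig_zero]; exact lt_of_lt_of_le hm₀c (min_le_left _ _)))
  have hev1 : ∀ᶠ y in nhdsWithin 1 (Set.Icc (0:ℝ) 1), m₀ < transEig a b y :=
    (eig_cont 1 h1m).eventually (eventually_gt_nhds (by
      rw [eig_one]; exact lt_of_lt_of_le hm₀c (min_le_right _ _)))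
  rw [eventually_nhdsWithin_iff, Metric.eventually_nhds_iff] at hev0 hev1
  obtain ⟨ε₀, hε₀, h0⟩ := hev0
  obtain ⟨ε₁, hε₁, h1⟩ := hev1
  refine ⟨min (min ε₀ ε₁) (1 / 2), m₀, by positivity,
    le_trans (min_le_right _ _) le_rfl, hm₀1, ?_⟩
  intro y hy hcase
  rcases hcase with hl | hr
  · refine (h0 ?_ hy).le
    rw [Real.dist_eq, sub_zero, abs_of_nonneg hy.1]
    calc y < min (min ε₀ ε₁) (1 / 2) := hl
      _ ≤ ε₀ := le_trans (min_le_left _ _) (min_le_left _ _)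
  · refine (h1 ?_ hy).le
    rw [Real.dist_eq, abs_of_nonpos (by linarith [hy.2])]
    have hle : min (min ε₀ ε₁) (1 / 2) ≤ ε₁ :=
      le_trans (min_le_left _ _) (min_le_right _ _)
    linarith

end chaosAux

/-- For every `a > 0` and `b ∈ (0,1)` there exist a positive integer `N` and
`κ > 1` such that for every `x ∈ [0,1]`,
`Π_{k<N} λ_{a,b}(f_{a,b}^k(x)) ≥ κ`. -/
theorem stmt_15 (a b : ℝ) (ha : 0 < a) (hb : b ∈ Set.Ioo (0 : ℝ) 1) :
    ∃ N : ℕ, 0 < N ∧ ∃ κ : ℝ, 1 < κ ∧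
      ∀ x ∈ Set.Icc (0 : ℝ) 1,
        κ ≤ ∏ k ∈ Finset.range N, transEig a b ((chaosMap a b)^[k] x) := by
  obtain ⟨hb1, hb2⟩ := hb
  obtain ⟨η, m₀, hη, hη2, hm₀, hbd⟩ := boundary_gain ha hb1 hb2
  set β : ℝ := min η (b / (1 + Real.exp a)) * min η ((1 - b) * Real.exp (-a)) with hβdef
  have hβpos : 0 < β :=
    mul_pos (lt_min hη (by positivity)) (lt_min hη (mul_pos (by linarith) (Real.exp_pos _)))
  have hc2 : (0:ℝ) < (1 - b) * Real.exp (-a) := mul_pos (by linarith) (Real.exp_pos _)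
  have hβη : β ≤ η * η :=
    mul_le_mul (min_le_left _ _) (min_le_left _ _) (le_min hη.le hc2.le) hη.le
  have h4β : 4 * β ≤ 1 := by nlinarith
  set m : ℝ := min m₀ (1 + a * β) with hmdef
  have hm1 : 1 < m := lt_min hm₀ (by nlinarith)
  have hm0 : (0:ℝ) ≤ m := by linarith
  -- main uniform estimate
  have AUX : ∀ n : ℕ, ∀ x ∈ Set.Icc (0:ℝ) 1,
      4 * β * m ^ n ≤ ∏ k ∈ Finset.range n, transEig a b ((chaosMap a b)^[k] x) := by
    intro n
    induction n with
    | zero => intro x hx; simpa using h4β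
    | succ n ih =>
      intro x hx
      by_cases hxin : x ∈ Set.Icc η (1 - η)
      · -- interior case
        have hxIoo : x ∈ Set.Ioo (0:ℝ) 1 :=
          ⟨lt_of_lt_of_le hη hxin.1, lt_of_le_of_lt hxin.2 (by linarith)⟩
        have hkey := interior_prod ha hb1 hb2 hxIoo (n + 1)
        set γ : ℝ := min x (b / (1 + Real.exp a))
        set γ' : ℝ := min (1 - x) ((1 - b) * Real.exp (-a))
        have hγ' : 0 ≤ γ' := le_min (by linarith [hxIoo.2]) hc2.le
        have hβγ : β ≤ γ * γ' := by
          apply mul_le_mul (min_le_min_right _ hxin.1) ?_ (le_min hη.le hc2.le) ?_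
          · exact min_le_min_right _ (by linarith [hxin.2])
          · exact le_min hxIoo.1.le (by positivity)
        refine le_trans ?_ hkey
        apply mul_le_mul (by linarith) ?_ (pow_nonneg hm0 _) (by nlinarith [mul_pos ha hβpos])
        apply pow_le_pow_left₀ hm0
        calc m ≤ 1 + a * β := min_le_right _ _
          _ ≤ 1 + a * (γ * γ') := by nlinarith
      · -- boundary case
        have hcase : x < η ∨ 1 - η < x := by
          rcases not_and_or.mp hxin with h | h
          · exact Or.inl (lt_of_not_ge h)
          · exact Or.inr (lt_of_not_ge h)
        have hlam : m₀ ≤ transEig a b x := hbd x hx hcase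
        have hfx : chaosMap a b x ∈ Set.Icc (0:ℝ) 1 := map_mem_Icc hx
        have hstep := ih (chaosMap a b x) hfx
        have hrw : ∏ k ∈ Finset.range (n + 1), transEig a b ((chaosMap a b)^[k] x) =
            (∏ k ∈ Finset.range n, transEig a b ((chaosMap a b)^[k] (chaosMap a b x))) *
              transEig a b x := by
          rw [Finset.prod_range_succ']
          congr 1
        rw [hrw]
        have hprodnn : 0 ≤ ∏ k ∈ Finset.range n,
            transEig a b ((chaosMap a b)^[k] (chaosMap a b x)) :=
          Finset.prod_nonneg fun k _ =>
            (eig_pos ha (iter_mem_Icc hfx k).1 (iter_mem_Icc hfx k).2).le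
        calc 4 * β * m ^ (n + 1) = (4 * β * m ^ n) * m := by ring
          _ ≤ (∏ k ∈ Finset.range n, transEig a b ((chaosMap a b)^[k] (chaosMap a b x))) *
              transEig a b x :=
            mul_le_mul hstep (le_trans (min_le_left _ _) hlam) hm0 hprodnn
  -- choose N
  obtain ⟨N₀, hN₀⟩ := pow_unbounded_of_one_lt (1 / (2 * β)) hm1
  refine ⟨N₀ + 1, Nat.succ_pos _, 4 * β * m ^ (N₀ + 1), ?_, fun x hx => AUX (N₀ + 1) x hx⟩
  have hpow : 1 / (2 * β) < m ^ (N₀ + 1) :=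
    lt_of_lt_of_le hN₀ (pow_le_pow_right₀ hm1.le (Nat.le_succ _))
  rw [div_lt_iff₀ (by positivity)] at hpow
  nlinarith
end

section
/- For every a > 0 and b ∈ (0,1), if (x,y) ∈ [0,1]² satisfies 0 ≤ y < b < x ≤ 1, then the sequence of iterates F_{a,b}^n(x,y) converges to (1,0) as n → ∞; moreover, the first coordinates form a strictly increasing sequence and the second coordinates a strictly decreasing sequence (for (x,y) with 0 < y < b < x < 1). -/
/-- The two-dimensional map `F_{a,b}`. -/
noncomputable def chaosMap2 (a b : ℝ) : ℝ × ℝ → ℝ × ℝ :=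
  fun p => (p.1 / (p.1 + (1 - p.1) * Real.exp (a * (p.2 - b))),
            p.2 / (p.2 + (1 - p.2) * Real.exp (a * (p.1 - b))))

lemma chaosStep (a b u v : ℝ) (ha : 0 < a) (hb0 : 0 < b) (hb1 : b < 1)
    (hbu : b < u) (hu1 : u ≤ 1) (hv0 : 0 ≤ v) (hvb : v < b) :
    u ≤ (chaosMap2 a b (u, v)).1 ∧ (chaosMap2 a b (u, v)).1 ≤ 1 ∧
    0 ≤ (chaosMap2 a b (u, v)).2 ∧ (chaosMap2 a b (u, v)).2 ≤ v ∧
    (1 - (chaosMap2 a b (u, v)).1) / (chaosMap2 a b (u, v)).1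
      = Real.exp (a * (v - b)) * ((1 - u) / u) ∧
    (chaosMap2 a b (u, v)).2 / (1 - (chaosMap2 a b (u, v)).2)
      = (Real.exp (a * (u - b)))⁻¹ * (v / (1 - v)) ∧
    (u < 1 → (chaosMap2 a b (u, v)).1 < 1 ∧ u < (chaosMap2 a b (u, v)).1) ∧
    (0 < v → 0 < (chaosMap2 a b (u, v)).2 ∧ (chaosMap2 a b (u, v)).2 < v) := by
  have hu0 : 0 < u := hb0.trans hbu
  have hv1 : v < 1 := hvb.trans hb1
  set E := Real.exp (a * (v - b)) with hE
  set F := Real.exp (a * (u - b)) with hF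
  have hE0 : 0 < E := Real.exp_pos _
  have hF0 : 0 < F := Real.exp_pos _
  have hE1 : E < 1 := by
    rw [hE, Real.exp_lt_one_iff]; nlinarith
  have hF1 : 1 < F := by
    rw [hF, Real.one_lt_exp_iff]; nlinarith
  have hD1 : 0 < u + (1 - u) * E := by nlinarith
  have hD1le : u + (1 - u) * E ≤ 1 := by nlinarith
  have hD2 : 1 ≤ v + (1 - v) * F := by nlinarith
  have hD20 : 0 < v + (1 - v) * F := by linarith
  simp only [chaosMap2, ← hE, ← hF]
  refine ⟨?_, ?_, ?_, ?_, ?_, ?_, ?_, ?_⟩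
  · rw [le_div_iff₀ hD1]; nlinarith
  · rw [div_le_one hD1]; nlinarith
  · positivity
  · rw [div_le_iff₀ hD20]; nlinarith
  · field_simp
    ring
  · have h1v : (0:ℝ) < 1 - v := by linarith
    have h1 : 1 - v / (v + (1 - v) * F) = (1 - v) * F / (v + (1 - v) * F) := by
      field_simp
      ring
    rw [h1, div_div_div_cancel_right₀]
    · rw [eq_comm, inv_mul_eq_div, div_div]
    · exact hD20.ne'
  · intro h1
    constructor
    · rw [div_lt_one hD1]
      nlinarith [mul_pos (sub_pos.mpr h1) hE0]
    · rw [lt_div_iff₀ hD1]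
      nlinarith [mul_pos (mul_pos hu0 (sub_pos.mpr h1)) (sub_pos.mpr hE1)]
  · intro h1
    constructor
    · positivity
    · rw [div_lt_iff₀ hD20]
      nlinarith [mul_pos (mul_pos h1 (sub_pos.mpr hv1)) (sub_pos.mpr hF1)]

/-- For every `a > 0`, `b ∈ (0,1)` and `(x,y)` with `0 ≤ y < b < x ≤ 1`, the
trajectory of `(x,y)` under `F_{a,b}` converges to `(1,0)`; moreover if
`0 < y` and `x < 1` the first coordinates strictly increase and the second
coordinates strictly decrease. -/
theorem stmt_16 (a b : ℝ) (ha : 0 < a) (hb : b ∈ Set.Ioo (0 : ℝ) 1)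
    (x y : ℝ) (hy0 : 0 ≤ y) (hyb : y < b) (hbx : b < x) (hx1 : x ≤ 1) :
    Filter.Tendsto (fun n : ℕ => (chaosMap2 a b)^[n] (x, y))
      Filter.atTop (nhds ((1 : ℝ), (0 : ℝ))) ∧
    (0 < y → x < 1 →
      StrictMono (fun n : ℕ => ((chaosMap2 a b)^[n] (x, y)).1) ∧
      StrictAnti (fun n : ℕ => ((chaosMap2 a b)^[n] (x, y)).2)) := by
  obtain ⟨hb0, hb1⟩ := hb
  have hx0 : 0 < x := hb0.trans hbx
  have hy1 : y < 1 := hyb.trans hb1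
  set f := chaosMap2 a b with hf
  set X : ℕ → ℝ := fun n => (f^[n] (x, y)).1 with hX
  set Y : ℕ → ℝ := fun n => (f^[n] (x, y)).2 with hY
  set c := Real.exp (a * (y - b)) with hc
  set d := (Real.exp (a * (x - b)))⁻¹ with hd
  have hc0 : 0 < c := Real.exp_pos _
  have hc1 : c < 1 := by rw [hc, Real.exp_lt_one_iff]; nlinarith
  have hd0 : 0 < d := by rw [hd]; positivity
  have hd1 : d < 1 := by
    rw [hd]
    rw [inv_lt_one_iff₀]
    right
    rw [Real.one_lt_exp_iff]; nlinarith
  have hiter : ∀ n : ℕ, f^[n + 1] (x, y) = chaosMap2 a b (X n, Y n) := by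
    intro n
    rw [Function.iterate_succ_apply', hf]
  have key : ∀ n : ℕ, b < X n ∧ X n ≤ 1 ∧ 0 ≤ Y n ∧ Y n ≤ y ∧ x ≤ X n ∧
      (1 - X n) / X n ≤ c ^ n * ((1 - x) / x) ∧
      Y n / (1 - Y n) ≤ d ^ n * (y / (1 - y)) := by
    intro n
    induction n with
    | zero => simp [hX, hY, hbx, hx1, hy0]
    | succ n ih =>
      obtain ⟨h1, h2, h3, h4, h5, h6, h7⟩ := ih
      have hYnb : Y n < b := lt_of_le_of_lt h4 hyb
      obtain ⟨s1, s2, s3, s4, s5, s6, _, _⟩ :=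
        chaosStep a b (X n) (Y n) ha hb0 hb1 h1 h2 h3 hYnb
      have hXn1 : X (n + 1) = (chaosMap2 a b (X n, Y n)).1 := by
        exact congrArg Prod.fst (hiter n)
      have hYn1 : Y (n + 1) = (chaosMap2 a b (X n, Y n)).2 := by
        exact congrArg Prod.snd (hiter n)
      rw [hXn1, hYn1]
      have hXn0 : 0 < X n := hb0.trans h1
      refine ⟨lt_of_lt_of_le h1 s1, s2, s3, le_trans s4 h4, le_trans h5 s1, ?_, ?_⟩
      · rw [s5]
        have hec : Real.exp (a * (Y n - b)) ≤ c := by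
          rw [hc]; apply Real.exp_le_exp.mpr; nlinarith
        have hun : 0 ≤ (1 - X n) / X n := div_nonneg (by linarith) hXn0.le
        calc Real.exp (a * (Y n - b)) * ((1 - X n) / X n)
            ≤ c * (c ^ n * ((1 - x) / x)) := by
              apply mul_le_mul hec h6 hun hc0.le
          _ = c ^ (n + 1) * ((1 - x) / x) := by ring
      · rw [s6]
        have hed : (Real.exp (a * (X n - b)))⁻¹ ≤ d := by
          rw [hd]
          apply inv_anti₀ (Real.exp_pos _)
          apply Real.exp_le_exp.mpr; nlinarith
        have hvn : 0 ≤ Y n / (1 - Y n) := by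
          apply div_nonneg h3; linarith
        calc (Real.exp (a * (X n - b)))⁻¹ * (Y n / (1 - Y n))
            ≤ d * (d ^ n * (y / (1 - y))) := by
              apply mul_le_mul hed h7 hvn hd0.le
          _ = d ^ (n + 1) * (y / (1 - y)) := by ring
  constructor
  · -- convergence
    have hXlow : ∀ n, 1 - c ^ n * ((1 - x) / x) ≤ X n := by
      intro n
      obtain ⟨h1, h2, h3, h4, h5, h6, h7⟩ := key n
      have hXn0 : 0 < X n := hb0.trans h1
      have : 1 - X n ≤ (1 - X n) / X n := by
        rw [le_div_iff₀ hXn0]; nlinarith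
      linarith
    have hYup : ∀ n, Y n ≤ d ^ n * (y / (1 - y)) := by
      intro n
      obtain ⟨h1, h2, h3, h4, h5, h6, h7⟩ := key n
      have h1Y : 0 < 1 - Y n := by linarith [lt_of_le_of_lt h4 hyb]
      have : Y n ≤ Y n / (1 - Y n) := by
        rw [le_div_iff₀ h1Y]; nlinarith
      linarith
    have hclim : Filter.Tendsto (fun n : ℕ => c ^ n * ((1 - x) / x))
        Filter.atTop (nhds 0) := by
      simpa using (tendsto_pow_atTop_nhds_zero_of_lt_one hc0.le hc1).mul_const ((1 - x) / x)
    have hdlim : Filter.Tendsto (fun n : ℕ => d ^ n * (y / (1 - y)))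
        Filter.atTop (nhds 0) := by
      simpa using (tendsto_pow_atTop_nhds_zero_of_lt_one hd0.le hd1).mul_const (y / (1 - y))
    have hXlim : Filter.Tendsto X Filter.atTop (nhds 1) := by
      apply tendsto_of_tendsto_of_tendsto_of_le_of_le
        (g := fun n : ℕ => 1 - c ^ n * ((1 - x) / x)) (h := fun _ : ℕ => (1 : ℝ))
      · simpa using Filter.Tendsto.const_sub 1 hclim
      · exact tendsto_const_nhds
      · exact hXlow
      · intro n; exact (key n).2.1
    have hYlim : Filter.Tendsto Y Filter.atTop (nhds 0) := by
      apply tendsto_of_tendsto_of_tendsto_of_le_of_le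
        (g := fun _ : ℕ => (0 : ℝ)) (h := fun n : ℕ => d ^ n * (y / (1 - y)))
      · exact tendsto_const_nhds
      · exact hdlim
      · intro n; exact (key n).2.2.1
      · exact hYup
    have heq : (fun n : ℕ => f^[n] (x, y)) = fun n => (X n, Y n) := by
      funext n
      exact Prod.mk.eta.symm
    rw [heq]
    exact hXlim.prodMk_nhds hYlim
  · intro hy0' hx1'
    have key2 : ∀ n : ℕ, 0 < Y n ∧ X n < 1 := by
      intro n
      induction n with
      | zero => simpa [hX, hY] using ⟨hy0', hx1'⟩
      | succ n ih =>
        obtain ⟨h1, h2, h3, h4, h5, h6, h7⟩ := key n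
        obtain ⟨hyn, hxn⟩ := ih
        obtain ⟨_, _, _, _, _, _, s7, s8⟩ :=
          chaosStep a b (X n) (Y n) ha hb0 hb1 h1 h2 h3 (lt_of_le_of_lt h4 hyb)
        have hXn1 : X (n + 1) = (chaosMap2 a b (X n, Y n)).1 := by
          exact congrArg Prod.fst (hiter n)
        have hYn1 : Y (n + 1) = (chaosMap2 a b (X n, Y n)).2 := by
          exact congrArg Prod.snd (hiter n)
        rw [hXn1, hYn1]
        exact ⟨(s8 hyn).1, (s7 hxn).1⟩
    constructor
    · apply strictMono_nat_of_lt_succ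
      intro n
      obtain ⟨h1, h2, h3, h4, _⟩ := key n
      obtain ⟨_, _, _, _, _, _, s7, _⟩ :=
        chaosStep a b (X n) (Y n) ha hb0 hb1 h1 h2 h3 (lt_of_le_of_lt h4 hyb)
      have hXn1 : X (n + 1) = (chaosMap2 a b (X n, Y n)).1 := by
        exact congrArg Prod.fst (hiter n)
      show X n < X (n + 1)
      rw [hXn1]
      exact (s7 (key2 n).2).2
    · apply strictAnti_nat_of_succ_lt
      intro n
      obtain ⟨h1, h2, h3, h4, _⟩ := key n
      obtain ⟨_, _, _, _, _, _, _, s8⟩ :=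
        chaosStep a b (X n) (Y n) ha hb0 hb1 h1 h2 h3 (lt_of_le_of_lt h4 hyb)
      have hYn1 : Y (n + 1) = (chaosMap2 a b (X n, Y n)).2 := by
        exact congrArg Prod.snd (hiter n)
      show Y (n + 1) < Y n
      rw [hYn1]
      exact (s8 (key2 n).1).2
end

section
/- For every a > 0 and b ∈ (0,1), if (x,y) ∈ [0,1]² satisfies 0 ≤ y < x ≤ 1, then the sequence of iterates F_{a,b}^n(x,y) converges to (1,0) as n → ∞. -/
open Real Filter Topology

noncomputable def sig (t : ℝ) : ℝ := Real.exp t / (1 + Real.exp t)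

lemma one_add_exp_pos_s18 (t : ℝ) : 0 < 1 + exp t := by positivity

lemma sig_pos (t : ℝ) : 0 < sig t := div_pos (exp_pos t) (one_add_exp_pos_s18 t)

lemma sig_lt_one (t : ℝ) : sig t < 1 := by
  rw [sig, div_lt_one (one_add_exp_pos_s18 t)]; linarith

lemma sig_le_one (t : ℝ) : sig t ≤ 1 := (sig_lt_one t).le

lemma one_sub_sig (t : ℝ) : 1 - sig t = 1 / (1 + exp t) := by
  rw [sig]; field_simp; ring

lemma sig_strictMono : StrictMono sig := by
  intro s t hst
  rw [sig, sig, div_lt_div_iff₀ (one_add_exp_pos_s18 s) (one_add_exp_pos_s18 t)]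
  have h := exp_lt_exp.2 hst
  nlinarith [exp_pos s, exp_pos t]

lemma sig_mono : Monotone sig := sig_strictMono.monotone

lemma sig_logit {x : ℝ} (h0 : 0 < x) (h1 : x < 1) : sig (log (x / (1 - x))) = x := by
  have h1' : 0 < 1 - x := by linarith
  rw [sig, exp_log (by positivity)]
  field_simp; ring

lemma sig_step (u c : ℝ) : sig u / (sig u + (1 - sig u) * exp c) = sig (u - c) := by
  have h1 := one_add_exp_pos_s18 u
  have h2 := one_add_exp_pos_s18 (u - c)
  have hc := exp_pos c
  have hu := exp_pos u
  rw [one_sub_sig, sig, sig, exp_sub]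
  field_simp
  ring

lemma sig_tendsto_atTop : Tendsto sig atTop (𝓝 1) := by
  have h : sig = fun t => 1 - 1 / (1 + exp t) := funext fun t => by
    rw [← one_sub_sig]; ring
  rw [h]
  have h2 : Tendsto (fun t : ℝ => 1 / (1 + exp t)) atTop (𝓝 0) :=
    Tendsto.div_atTop tendsto_const_nhds (tendsto_atTop_add_const_left _ 1 tendsto_exp_atTop)
  simpa using tendsto_const_nhds.sub h2

lemma sig_tendsto_atBot : Tendsto sig atBot (𝓝 0) := by
  have h : Tendsto (fun t : ℝ => exp t) atBot (𝓝 0) := tendsto_exp_atBot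
  have h2 : Tendsto (fun t : ℝ => 1 + exp t) atBot (𝓝 1) := by
    simpa using tendsto_const_nhds.add h
  have h3 : Tendsto (fun t : ℝ => exp t / (1 + exp t)) atBot (𝓝 (0 / 1)) := h.div h2 (by norm_num)
  rw [zero_div] at h3
  exact h3

lemma sig_gap {L H d : ℝ} (hd : 0 < d) {v : ℝ} (hL : L ≤ v) (hH : v ≤ H) :
    exp L * (exp d - 1) / ((1 + exp H) * (1 + exp (H + d))) ≤ sig (v + d) - sig v := by
  have key : sig (v + d) - sig v = exp v * (exp d - 1) / ((1 + exp v) * (1 + exp (v + d))) := by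
    rw [sig, sig, exp_add]
    field_simp
    ring
  rw [key]
  have hed : (0:ℝ) ≤ exp d - 1 := by nlinarith [add_one_le_exp d, hd]
  gcongr
  all_goals first
    | exact exp_le_exp.2 hL
    | exact exp_le_exp.2 hH
    | exact exp_le_exp.2 (by linarith : H + d ≤ v + d)
    | positivity

lemma main_uv (a b : ℝ) (ha : 0 < a) (hb0 : 0 < b) (hb1 : b < 1)
    (u v : ℕ → ℝ)
    (hu : ∀ n, u (n + 1) = u n - a * (sig (v n) - b))
    (hv : ∀ n, v (n + 1) = v n - a * (sig (u n) - b))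
    (h0 : v 0 < u 0) :
    Tendsto u atTop atTop ∧ Tendsto v atTop atBot := by
  set β := Real.log (b / (1 - b)) with hβ
  have hsigβ : sig β = b := sig_logit hb0 hb1
  -- order preserved
  have hord : ∀ n, v n < u n := by
    intro n
    induction n with
    | zero => exact h0
    | succ n ih =>
      have hs : sig (v n) < sig (u n) := sig_strictMono ih
      rw [hu, hv]; nlinarith
  -- D monotone
  have hDmono : Monotone (fun n => u n - v n) := by
    apply monotone_nat_of_le_succ
    intro n
    have hs : sig (v n) ≤ sig (u n) := sig_mono (hord n).le
    rw [hu, hv]; nlinarith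
  have hD0 : ∀ n, u 0 - v 0 ≤ u n - v n := fun n => hDmono (Nat.zero_le n)
  have hd0pos : 0 < u 0 - v 0 := by linarith
  -- u bounded below
  set ulo := min (u 0) (β + (u 0 - v 0) - a) with hulo_def
  have hulo : ∀ n, ulo ≤ u n := by
    intro n
    induction n with
    | zero => exact min_le_left _ _
    | succ n ih =>
      by_cases hyb : sig (v n) ≤ b
      · rw [hu]; nlinarith
      · push_neg at hyb
        have hvβ : β < v n := by
          by_contra h
          push_neg at h
          have := sig_mono h
          rw [hsigβ] at this; linarith
        have h1 : β + (u 0 - v 0) < u n := by have := hD0 n; linarith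
        have h2 : sig (v n) ≤ 1 := sig_le_one _
        have h3 : ulo ≤ β + (u 0 - v 0) - a := min_le_right _ _
        rw [hu]; nlinarith
  -- v bounded above
  set vhi := max (v 0) (β - (u 0 - v 0) + a) with hvhi_def
  have hvhi : ∀ n, v n ≤ vhi := by
    intro n
    induction n with
    | zero => exact le_max_left _ _
    | succ n ih =>
      by_cases hxb : b ≤ sig (u n)
      · rw [hv]; nlinarith
      · push_neg at hxb
        have huβ : u n < β := by
          by_contra h
          push_neg at h
          have := sig_mono h
          rw [hsigβ] at this; linarith
        have h1 : v n < β - (u 0 - v 0) := by have := hD0 n; linarith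
        have h2 : 0 < sig (u n) := sig_pos _
        have h3 : β - (u 0 - v 0) + a ≤ vhi := le_max_right _ _
        rw [hv]; nlinarith
  -- D tends to infinity
  have hDtop : Tendsto (fun n => u n - v n) atTop atTop := by
    apply tendsto_atTop_atTop_of_monotone hDmono
    intro M
    by_contra hM
    push_neg at hM
    set d0 := u 0 - v 0 with hd0_def
    set L := ulo - M with hL_def
    set c := exp L * (exp d0 - 1) / ((1 + exp vhi) * (1 + exp (vhi + d0))) with hc_def
    have hone : (1:ℝ) < exp d0 := by
      rw [show (1:ℝ) = exp 0 by simp]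
      exact exp_lt_exp.2 hd0pos
    have hc : 0 < c := by
      apply div_pos
      · have := exp_pos L; nlinarith
      · positivity
    have hstep : ∀ n, u 0 - v 0 + n * (a * c) ≤ u n - v n := by
      intro n
      induction n with
      | zero => simp
      | succ n ih =>
        have hvL : L ≤ v n := by
          have h1 := hulo n
          have h2 := hM n
          have : v n = u n - (u n - v n) := by ring
          rw [this]; simp only [hL_def]; linarith
        have hgap1 : sig (v n + d0) ≤ sig (u n) := sig_mono (by have := hD0 n; linarith)
        have hgap2 := sig_gap hd0pos hvL (hvhi n)
        have hgap : c ≤ sig (u n) - sig (v n) := by rw [hc_def]; linarith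
        have hac : a * c ≤ a * (sig (u n) - sig (v n)) := by nlinarith
        rw [hu, hv]
        push_cast
        linarith
    obtain ⟨n, hn⟩ := exists_nat_gt ((M - (u 0 - v 0)) / (a * c))
    have h1 := hstep n
    have h2 := hM n
    have h3 : (M - (u 0 - v 0)) < n * (a * c) := by
      rw [div_lt_iff₀ (by positivity)] at hn; linarith
    linarith
  -- v tends to -infinity
  have hVbot : Tendsto v atTop atBot := by
    rw [tendsto_atBot]
    intro K
    have hmid0 : (0:ℝ) < (1 + b) / 2 := by linarith
    have hmid1 : (1 + b) / 2 < 1 := by linarith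
    set T := Real.log (((1 + b) / 2) / (1 - (1 + b) / 2)) with hT
    have hsigT : sig T = (1 + b) / 2 := sig_logit hmid0 hmid1
    set ε := a * ((1 - b) / 2) with hε_def
    have hε : 0 < ε := mul_pos ha (by linarith)
    obtain ⟨N0, hN0⟩ := (hDtop.eventually_ge_atTop (T + a - K)).exists
    have hDge : ∀ n, N0 ≤ n → T + a - K ≤ u n - v n := fun n hn => le_trans hN0 (hDmono hn)
    have hbig : ∀ n, N0 ≤ n → K - a ≤ v n → v (n + 1) ≤ v n - ε := by
      intro n hn hvn
      have hun : T ≤ u n := by have := hDge n hn; linarith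
      have hsu : (1 + b) / 2 ≤ sig (u n) := by
        have := sig_mono hun; rwa [hsigT] at this
      rw [hv, hε_def]; nlinarith
    have hup : ∀ n, v (n + 1) ≤ v n + a := by
      intro n
      have h1 := sig_pos (u n)
      rw [hv]; nlinarith
    have hexists : ∃ n, N0 ≤ n ∧ v n < K - a := by
      by_contra h
      push_neg at h
      have hdesc : ∀ m : ℕ, v (N0 + m) ≤ v N0 - m * ε := by
        intro m
        induction m with
        | zero => simp
        | succ m ih =>
          have h1 := hbig (N0 + m) (Nat.le_add_right _ _) (h _ (Nat.le_add_right _ _))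
          have : N0 + (m + 1) = (N0 + m) + 1 := rfl
          rw [this]
          push_cast
          linarith
      obtain ⟨m, hm⟩ := exists_nat_gt ((v N0 - (K - a)) / ε)
      have h1 := hdesc m
      have h2 := h (N0 + m) (Nat.le_add_right _ _)
      have h3 : v N0 - (K - a) < m * ε := by
        rw [div_lt_iff₀ hε] at hm; linarith
      linarith
    obtain ⟨N1, hN1ge, hN1⟩ := hexists
    have hinv : ∀ m : ℕ, v (N1 + m) ≤ K := by
      intro m
      induction m with
      | zero => simpa using by linarith
      | succ m ih =>
        have hN0le : N0 ≤ N1 + m := le_trans hN1ge (Nat.le_add_right _ _)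
        have : N1 + (m + 1) = (N1 + m) + 1 := rfl
        rw [this]
        by_cases hc2 : K - a ≤ v (N1 + m)
        · have := hbig (N1 + m) hN0le hc2
          linarith
        · push_neg at hc2
          have := hup (N1 + m)
          linarith
    filter_upwards [eventually_ge_atTop N1] with n hn
    obtain ⟨m, rfl⟩ := Nat.exists_eq_add_of_le hn
    exact hinv m
  -- u tends to infinity
  have hUtop : Tendsto u atTop atTop := by
    have hb20 : (0:ℝ) < b / 2 := by linarith
    have hb21 : b / 2 < 1 := by linarith
    set K := Real.log ((b / 2) / (1 - b / 2)) with hK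
    have hsigK : sig K = b / 2 := sig_logit hb20 hb21
    obtain ⟨N, hN⟩ := eventually_atTop.1 (hVbot.eventually_le_atBot K)
    have hstep2 : ∀ n, N ≤ n → u n + a * (b / 2) ≤ u (n + 1) := by
      intro n hn
      have hsv : sig (v n) ≤ b / 2 := by
        have := sig_mono (hN n hn); rwa [hsigK] at this
      rw [hu]; nlinarith
    have hgrow : ∀ m : ℕ, u N + m * (a * (b / 2)) ≤ u (N + m) := by
      intro m
      induction m with
      | zero => simp
      | succ m ih =>
        have h1 := hstep2 (N + m) (Nat.le_add_right _ _)
        have : N + (m + 1) = (N + m) + 1 := rfl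
        rw [this]
        push_cast
        linarith
    rw [tendsto_atTop]
    intro M
    obtain ⟨m0, hm0⟩ := exists_nat_gt ((M - u N) / (a * (b / 2)))
    filter_upwards [eventually_ge_atTop (N + m0)] with n hn
    obtain ⟨m, rfl⟩ := Nat.exists_eq_add_of_le (le_trans (Nat.le_add_right N m0) hn)
    have hm : m0 ≤ m := by omega
    have h1 := hgrow m
    have h2 : (M - u N) < m0 * (a * (b / 2)) := by
      rw [div_lt_iff₀ (by positivity)] at hm0; linarith
    have h3 : (m0 : ℝ) * (a * (b / 2)) ≤ m * (a * (b / 2)) :=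
      mul_le_mul_of_nonneg_right (Nat.cast_le.2 hm) (by positivity)
    linarith
  exact ⟨hUtop, hVbot⟩

/-- the orbit in logit coordinates -/
noncomputable def orb (a b u0 v0 : ℝ) : ℕ → ℝ × ℝ
  | 0 => (u0, v0)
  | n + 1 =>
      ((orb a b u0 v0 n).1 - a * (sig (orb a b u0 v0 n).2 - b),
       (orb a b u0 v0 n).2 - a * (sig (orb a b u0 v0 n).1 - b))

/-- For every `a > 0` and `b ∈ (0,1)`, the trajectory of every point
`(x,y) ∈ [0,1]²` with `y < x` converges to `(1,0)`. -/
theorem stmt_18 (a b : ℝ) (ha : 0 < a) (hb : b ∈ Set.Ioo (0 : ℝ) 1)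
    (x y : ℝ) (hy0 : 0 ≤ y) (hyx : y < x) (hx1 : x ≤ 1) :
    Filter.Tendsto (fun n : ℕ => (chaosMap2 a b)^[n] (x, y))
      Filter.atTop (nhds ((1 : ℝ), (0 : ℝ))) := by
  obtain ⟨hb0, hb1⟩ := hb
  rcases hx1.lt_or_eq with hx1' | rfl
  · -- x < 1
    rcases hy0.eq_or_lt with rfl | hy0'
    · -- y = 0, 0 < x < 1
      have hx0 : 0 < x := hyx
      set u0 := Real.log (x / (1 - x)) with hu0
      have hxs : sig u0 = x := sig_logit hx0 hx1'
      have hiter : ∀ n : ℕ, (chaosMap2 a b)^[n] (x, 0) = (sig (u0 + n * (a * b)), 0) := by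
        intro n
        induction n with
        | zero => simp [hxs]
        | succ n ih =>
          rw [Function.iterate_succ_apply', ih]
          have h1 := sig_step (u0 + n * (a * b)) (a * (0 - b))
          simp only [chaosMap2]
          refine Prod.ext ?_ ?_
          · show sig (u0 + n * (a * b)) / _ = _
            rw [h1]
            congr 1
            push_cast
            ring
          · show (0:ℝ) / _ = 0
            exact zero_div _
      have hlim : Tendsto (fun n : ℕ => (sig (u0 + n * (a * b)), (0:ℝ))) atTop
          (𝓝 ((1:ℝ), (0:ℝ))) := by
        have h2 : Tendsto (fun n : ℕ => u0 + n * (a * b)) atTop atTop := by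
          apply tendsto_atTop_add_const_left
          exact Tendsto.atTop_mul_const (by positivity) tendsto_natCast_atTop_atTop
        exact (sig_tendsto_atTop.comp h2).prodMk_nhds tendsto_const_nhds
      exact hlim.congr (fun n => (hiter n).symm)
    · -- 0 < y < x < 1 : main case
      have hy1 : y < 1 := lt_trans hyx hx1'
      have hx0 : 0 < x := lt_trans hy0' hyx
      set u0 := Real.log (x / (1 - x)) with hu0d
      set v0 := Real.log (y / (1 - y)) with hv0d
      have hxs : sig u0 = x := sig_logit hx0 hx1'
      have hys : sig v0 = y := sig_logit hy0' hy1
      set u : ℕ → ℝ := fun n => (orb a b u0 v0 n).1 with hud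
      set v : ℕ → ℝ := fun n => (orb a b u0 v0 n).2 with hvd
      have hu : ∀ n, u (n + 1) = u n - a * (sig (v n) - b) := fun n => rfl
      have hv : ∀ n, v (n + 1) = v n - a * (sig (u n) - b) := fun n => rfl
      have h00 : v 0 < u 0 := by
        show v0 < u0
        by_contra h
        push_neg at h
        have := sig_strictMono.monotone h
        rw [hxs, hys] at this
        linarith
      obtain ⟨hU, hV⟩ := main_uv a b ha hb0 hb1 u v hu hv h00
      have hiter : ∀ n : ℕ, (chaosMap2 a b)^[n] (x, y) = (sig (u n), sig (v n)) := by
        intro n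
        induction n with
        | zero => exact Prod.ext hxs.symm hys.symm
        | succ n ih =>
          rw [Function.iterate_succ_apply', ih]
          have h1 := sig_step (u n) (a * (sig (v n) - b))
          have h2 := sig_step (v n) (a * (sig (u n) - b))
          simp only [chaosMap2]
          exact Prod.ext (by rw [← hu n] at h1; exact h1) (by rw [← hv n] at h2; exact h2)
      have hlim : Tendsto (fun n : ℕ => (sig (u n), sig (v n))) atTop (𝓝 ((1:ℝ), (0:ℝ))) :=
        (sig_tendsto_atTop.comp hU).prodMk_nhds (sig_tendsto_atBot.comp hV)
      exact hlim.congr (fun n => (hiter n).symm)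
  · -- x = 1
    rcases hy0.eq_or_lt with rfl | hy0'
    · -- fixed point (1,0)
      have hiter : ∀ n : ℕ, (chaosMap2 a b)^[n] ((1:ℝ), (0:ℝ)) = (1, 0) := by
        intro n
        induction n with
        | zero => rfl
        | succ n ih =>
          rw [Function.iterate_succ_apply', ih]
          simp [chaosMap2]
      have : Tendsto (fun _ : ℕ => ((1:ℝ),(0:ℝ))) atTop (𝓝 ((1:ℝ),(0:ℝ))) := tendsto_const_nhds
      exact this.congr (fun n => (hiter n).symm)
    · -- x = 1, 0 < y < 1
      have hy1 : y < 1 := hyx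
      set v0 := Real.log (y / (1 - y)) with hv0d
      have hys : sig v0 = y := sig_logit hy0' hy1
      have hiter : ∀ n : ℕ, (chaosMap2 a b)^[n] ((1:ℝ), y)
          = (1, sig (v0 - n * (a * (1 - b)))) := by
        intro n
        induction n with
        | zero => simp [hys]
        | succ n ih =>
          rw [Function.iterate_succ_apply', ih]
          have h2 := sig_step (v0 - n * (a * (1 - b))) (a * (1 - b))
          simp only [chaosMap2]
          refine Prod.ext ?_ ?_
          · show (1:ℝ) / (1 + (1 - 1) * _) = 1
            norm_num
          · show sig (v0 - n * (a * (1 - b))) / _ = _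
            rw [h2]
            congr 1
            push_cast
            ring
      have hlim : Tendsto (fun n : ℕ => ((1:ℝ), sig (v0 - n * (a * (1 - b))))) atTop
          (𝓝 ((1:ℝ), (0:ℝ))) := by
        have h2 : Tendsto (fun n : ℕ => v0 - n * (a * (1 - b))) atTop atBot := by
          apply tendsto_atBot_add_const_left
          have := Tendsto.atTop_mul_const (r := a * (1 - b)) (by nlinarith) tendsto_natCast_atTop_atTop
          exact tendsto_neg_atBot_iff.2 this |>.congr (fun n => by ring)
        exact tendsto_const_nhds.prodMk_nhds (sig_tendsto_atBot.comp h2)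
      exact hlim.congr (fun n => (hiter n).symm)
end

section
/- For every a > 0 and b ∈ (0,1), if (x,y) ∈ [0,1]² satisfies 0 ≤ x < y ≤ 1 (the point lies above the diagonal), then the sequence of iterates F_{a,b}^n(x,y) converges to (0,1) as n → ∞. -/
open Real Filter

namespace ChaosAux

/-- logistic function -/
noncomputable def sig (t : ℝ) : ℝ := exp t / (1 + exp t)
/-- logit -/
noncomputable def lgt (t : ℝ) : ℝ := Real.log (t / (1 - t))

lemma one_add_exp_pos (t : ℝ) : 0 < 1 + exp t := by positivity

lemma sig_pos (t : ℝ) : 0 < sig t := div_pos (exp_pos t) (one_add_exp_pos t)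

lemma sig_lt_one (t : ℝ) : sig t < 1 := by
  rw [sig, div_lt_one (one_add_exp_pos t)]; linarith [exp_pos t]

lemma sig_strictMono : StrictMono sig := by
  intro t u htu
  rw [sig, sig, div_lt_div_iff₀ (one_add_exp_pos t) (one_add_exp_pos u)]
  have := exp_lt_exp.2 htu
  nlinarith [exp_pos t, exp_pos u]

lemma sig_lgt {t : ℝ} (h0 : 0 < t) (h1 : t < 1) : sig (lgt t) = t := by
  have h1' : 0 < 1 - t := by linarith
  rw [sig, lgt, exp_log (by positivity)]
  field_simp
  ring

lemma sig_continuous : Continuous sig :=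
  Real.continuous_exp.div (by continuity) (fun t => by positivity)

lemma sig_tendsto_atBot : Tendsto sig atBot (nhds 0) := by
  have h : Tendsto (fun t => exp t) atBot (nhds 0) := tendsto_exp_atBot
  have h2 : Tendsto (fun t => 1 + exp t) atBot (nhds 1) := by
    simpa using (tendsto_const_nhds (x := (1:ℝ)) (f := atBot)).add h
  have h3 := h.div h2 (by norm_num)
  rw [zero_div] at h3
  exact h3

lemma lt_sig_iff {t u : ℝ} (h0 : 0 < t) (h1 : t < 1) : t < sig u ↔ lgt t < u := by
  rw [← sig_lgt h0 h1, sig_strictMono.lt_iff_lt, sig_lgt h0 h1]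
lemma sig_lt_iff {t u : ℝ} (h0 : 0 < t) (h1 : t < 1) : sig u < t ↔ u < lgt t := by
  rw [← sig_lgt h0 h1, sig_strictMono.lt_iff_lt, sig_lgt h0 h1]
lemma le_sig_iff {t u : ℝ} (h0 : 0 < t) (h1 : t < 1) : t ≤ sig u ↔ lgt t ≤ u := by
  rw [← sig_lgt h0 h1, sig_strictMono.le_iff_le, sig_lgt h0 h1]
lemma sig_le_iff {t u : ℝ} (h0 : 0 < t) (h1 : t < 1) : sig u ≤ t ↔ u ≤ lgt t := by
  rw [← sig_lgt h0 h1, sig_strictMono.le_iff_le, sig_lgt h0 h1]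
lemma lgt_lt_lgt {t u : ℝ} (h0 : 0 < t) (h1 : t < 1) (h0' : 0 < u) (h1' : u < 1) :
    lgt t < lgt u ↔ t < u := by
  rw [← sig_strictMono.lt_iff_lt, sig_lgt h0 h1, sig_lgt h0' h1']

/-- one coordinate of the map -/
noncomputable def G (a b t s : ℝ) : ℝ := t / (t + (1 - t) * exp (a * (s - b)))

variable {a b t s : ℝ}

lemma denom_pos (h0 : 0 ≤ t) (h1 : t ≤ 1) (hne : t ≠ 1 ∨ 0 < t) :
    0 < t + (1 - t) * exp (a * (s - b)) := by
  rcases hne with h | h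
  · have h1' : 0 < 1 - t := lt_of_le_of_ne (by linarith) (by intro hc; exact h (by linarith))
    have := exp_pos (a * (s - b))
    nlinarith
  · have := exp_pos (a * (s - b))
    nlinarith

lemma G_nonneg (h0 : 0 ≤ t) (h1 : t ≤ 1) : 0 ≤ G a b t s := by
  rcases eq_or_lt_of_le h0 with h | h
  · simp [G, ← h]
  · exact le_of_lt (div_pos h (denom_pos h0 h1 (Or.inr h)))

lemma G_le_one (h0 : 0 ≤ t) (h1 : t ≤ 1) : G a b t s ≤ 1 := by
  rcases eq_or_lt_of_le h0 with h | h
  · simp [G, ← h]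
  · rw [G, div_le_one (denom_pos h0 h1 (Or.inr h))]
    have := exp_pos (a * (s - b))
    nlinarith

lemma G_pos (h0 : 0 < t) (h1 : t ≤ 1) : 0 < G a b t s :=
  div_pos h0 (denom_pos h0.le h1 (Or.inr h0))

lemma G_lt_one (h0 : 0 < t) (h1 : t < 1) : G a b t s < 1 := by
  rw [G, div_lt_one (denom_pos h0.le h1.le (Or.inr h0))]
  have := exp_pos (a * (s - b))
  nlinarith

/-- the map decreases the coordinate when the other coordinate is ≥ b -/
lemma G_le_self (h0 : 0 ≤ t) (h1 : t ≤ 1) (hs : b ≤ s) (ha : 0 < a) : G a b t s ≤ t := by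
  have hE : 1 ≤ exp (a * (s - b)) := by
    rw [← exp_zero]; exact exp_le_exp.2 (by nlinarith)
  have hD : 1 ≤ t + (1 - t) * exp (a * (s - b)) := by nlinarith
  calc G a b t s ≤ t / 1 := by
        apply div_le_div_of_nonneg_left h0 (by norm_num) hD
      _ = t := by ring

/-- the map increases the coordinate when the other coordinate is ≤ b -/
lemma G_ge_self (h0 : 0 ≤ t) (h1 : t ≤ 1) (hs : s ≤ b) (ha : 0 < a) : t ≤ G a b t s := by
  rcases eq_or_lt_of_le h0 with h | h
  · simp [G, ← h]
  · have hE : exp (a * (s - b)) ≤ 1 := by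
      rw [← exp_zero]; exact exp_le_exp.2 (by nlinarith)
    have hD : t + (1 - t) * exp (a * (s - b)) ≤ 1 := by nlinarith [exp_pos (a * (s-b))]
    rw [G, le_div_iff₀ (denom_pos h0 h1 (Or.inr h))]
    nlinarith

/-- logit recurrence -/
lemma lgt_G (h0 : 0 < t) (h1 : t < 1) :
    lgt (G a b t s) = lgt t - a * (s - b) := by
  unfold lgt
  have hD : 0 < t + (1 - t) * exp (a * (s - b)) := denom_pos h0.le h1.le (Or.inr h0)
  have h1' : 0 < 1 - t := by linarith
  have key : G a b t s / (1 - G a b t s) = (t / (1 - t)) / exp (a * (s - b)) := by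
    rw [G]
    rw [eq_div_iff (exp_ne_zero _)]
    field_simp
    ring
  rw [key, Real.log_div (by positivity) (exp_ne_zero _), Real.log_exp]

lemma iter_succ (a b x y : ℝ) (n : ℕ) :
    (chaosMap2 a b)^[n+1] (x, y)
      = (G a b ((chaosMap2 a b)^[n] (x, y)).1 ((chaosMap2 a b)^[n] (x, y)).2,
         G a b ((chaosMap2 a b)^[n] (x, y)).2 ((chaosMap2 a b)^[n] (x, y)).1) := by
  rw [Function.iterate_succ_apply']
  rfl

/-- Trap region lemma. -/
theorem key (ha : 0 < a) (hb0 : 0 < b) (hb1 : b < 1) (x y : ℝ) (hx0 : 0 ≤ x) (hxb : x < b) (hby : b < y) (hy1 : y ≤ 1) :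
    Tendsto (fun n : ℕ => (chaosMap2 a b)^[n] (x, y)) atTop (nhds ((0:ℝ), (1:ℝ))) := by
  set X : ℕ → ℝ := fun n => ((chaosMap2 a b)^[n] (x, y)).1 with hX
  set Y : ℕ → ℝ := fun n => ((chaosMap2 a b)^[n] (x, y)).2 with hY
  have hXs : ∀ n, X (n+1) = G a b (X n) (Y n) := fun n => by
    rw [hX]; simp only [iter_succ]; rfl
  have hYs : ∀ n, Y (n+1) = G a b (Y n) (X n) := fun n => by
    rw [hY]; simp only [iter_succ]; rfl
  -- invariant
  have inv : ∀ n, 0 ≤ X n ∧ X n < b ∧ b < Y n ∧ Y n ≤ 1 := by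
    intro n
    induction n with
    | zero => exact ⟨hx0, hxb, hby, hy1⟩
    | succ n ih =>
      obtain ⟨h1, h2, h3, h4⟩ := ih
      have hx1 : X n ≤ 1 := le_trans h2.le (by linarith)
      have hy0 : 0 ≤ Y n := le_trans hb0.le h3.le
      refine ⟨?_, ?_, ?_, ?_⟩
      · rw [hXs]; exact G_nonneg h1 hx1
      · rw [hXs]; exact lt_of_le_of_lt (G_le_self h1 hx1 h3.le ha) h2
      · rw [hYs]; exact lt_of_lt_of_le h3 (G_ge_self hy0 h4 h2.le ha)
      · rw [hYs]; exact G_le_one hy0 h4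
  have hXanti : Antitone X := antitone_nat_of_succ_le (fun n => by
    obtain ⟨h1, h2, h3, h4⟩ := inv n
    rw [hXs]; exact G_le_self h1 (le_trans h2.le hb1.le) h3.le ha)
  have hYmono : Monotone Y := monotone_nat_of_le_succ (fun n => by
    obtain ⟨h1, h2, h3, h4⟩ := inv n
    rw [hYs]; exact G_ge_self (le_trans hb0.le h3.le) h4 h2.le ha)
  -- convergence of coordinates
  have hXbdd : BddBelow (Set.range X) := ⟨0, by rintro _ ⟨n, rfl⟩; exact (inv n).1⟩
  have hYbdd : BddAbove (Set.range Y) := ⟨1, by rintro _ ⟨n, rfl⟩; exact (inv n).2.2.2⟩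
  have hXlim : Tendsto X atTop (nhds (⨅ n, X n)) := tendsto_atTop_ciInf hXanti hXbdd
  have hYlim : Tendsto Y atTop (nhds (⨆ n, Y n)) := tendsto_atTop_ciSup hYmono hYbdd
  set xs := ⨅ n, X n with hxs
  set ys := ⨆ n, Y n with hys
  have hxs0 : 0 ≤ xs := le_ciInf (fun n => (inv n).1)
  have hxsb : xs < b := lt_of_le_of_lt (ciInf_le hXbdd 0) hxb
  have hbys : b < ys := lt_of_lt_of_le hby (le_ciSup hYbdd 0)
  have hys1 : ys ≤ 1 := ciSup_le (fun n => (inv n).2.2.2)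
  -- limits are a fixed point
  have hDx : Tendsto (fun n => X n + (1 - X n) * exp (a * (Y n - b))) atTop
      (nhds (xs + (1 - xs) * exp (a * (ys - b)))) := by
    exact hXlim.add (((tendsto_const_nhds.sub hXlim)).mul
      ((Real.continuous_exp.tendsto _).comp (((hYlim.sub_const b)).const_mul a)))
  have hDxpos : (0:ℝ) < xs + (1 - xs) * exp (a * (ys - b)) := by
    have hE : 1 ≤ exp (a * (ys - b)) := by
      rw [← exp_zero]; exact exp_le_exp.2 (by nlinarith)
    nlinarith
  have hfp_x : xs = xs / (xs + (1 - xs) * exp (a * (ys - b))) := by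
    have h1 : Tendsto (fun n => X (n+1)) atTop (nhds xs) :=
      hXlim.comp (tendsto_add_atTop_nat 1)
    have h2 : Tendsto (fun n => X (n+1)) atTop
        (nhds (xs / (xs + (1 - xs) * exp (a * (ys - b))))) := by
      simp only [hXs, G]
      exact hXlim.div hDx (ne_of_gt hDxpos)
    exact tendsto_nhds_unique h1 h2
  have hDy : Tendsto (fun n => Y n + (1 - Y n) * exp (a * (X n - b))) atTop
      (nhds (ys + (1 - ys) * exp (a * (xs - b)))) := by
    exact hYlim.add (((tendsto_const_nhds.sub hYlim)).mul
      ((Real.continuous_exp.tendsto _).comp (((hXlim.sub_const b)).const_mul a)))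
  have hDypos : (0:ℝ) < ys + (1 - ys) * exp (a * (xs - b)) := by
    have := exp_pos (a * (xs - b))
    nlinarith
  have hfp_y : ys = ys / (ys + (1 - ys) * exp (a * (xs - b))) := by
    have h1 : Tendsto (fun n => Y (n+1)) atTop (nhds ys) :=
      hYlim.comp (tendsto_add_atTop_nat 1)
    have h2 : Tendsto (fun n => Y (n+1)) atTop
        (nhds (ys / (ys + (1 - ys) * exp (a * (xs - b))))) := by
      simp only [hYs, G]
      exact hYlim.div hDy (ne_of_gt hDypos)
    exact tendsto_nhds_unique h1 h2
  -- solve fixed point equations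
  have hxs_eq : xs = 0 := by
    by_contra hne
    have hxpos : 0 < xs := lt_of_le_of_ne hxs0 (Ne.symm hne)
    have hE : 1 < exp (a * (ys - b)) := by
      rw [← exp_zero]; exact exp_lt_exp.2 (by nlinarith)
    have heq := hfp_x
    rw [eq_div_iff (ne_of_gt hDxpos)] at heq
    have hfac : xs * ((1 - xs) * (exp (a * (ys - b)) - 1)) = 0 := by linear_combination heq
    have : 0 < xs * ((1 - xs) * (exp (a * (ys - b)) - 1)) :=
      mul_pos hxpos (mul_pos (by linarith) (by linarith))
    linarith
  have hys_eq : ys = 1 := by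
    by_contra hne
    have hy1' : ys < 1 := lt_of_le_of_ne hys1 hne
    have hE : exp (a * (xs - b)) < 1 := by
      rw [← exp_zero]; exact exp_lt_exp.2 (by nlinarith)
    have hypos : 0 < ys := lt_trans hb0 hbys
    have heq := hfp_y
    rw [eq_div_iff (ne_of_gt hDypos)] at heq
    have hfac : ys * ((1 - ys) * (1 - exp (a * (xs - b)))) = 0 := by linear_combination -heq
    have : 0 < ys * ((1 - ys) * (1 - exp (a * (xs - b)))) :=
      mul_pos hypos (mul_pos (by linarith) (by linarith))
    linarith
  rw [← hxs_eq, ← hys_eq]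
  exact hXlim.prodMk_nhds hYlim


/-- If at some time `m` the orbit is in the trap region, the orbit converges to (0,1). -/
lemma tendsto_of_region (ha : 0 < a) (hb0 : 0 < b) (hb1 : b < 1) (x y : ℝ) (m : ℕ)
    (h1 : 0 ≤ ((chaosMap2 a b)^[m] (x, y)).1)
    (h2 : ((chaosMap2 a b)^[m] (x, y)).1 < b)
    (h3 : b < ((chaosMap2 a b)^[m] (x, y)).2)
    (h4 : ((chaosMap2 a b)^[m] (x, y)).2 ≤ 1) :
    Tendsto (fun n : ℕ => (chaosMap2 a b)^[n] (x, y)) atTop (nhds ((0:ℝ), (1:ℝ))) := by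
  have hk := key ha hb0 hb1 _ _ h1 h2 h3 h4
  rw [← tendsto_add_atTop_iff_nat m]
  have : (fun n => (chaosMap2 a b)^[n + m] (x, y))
      = fun n => (chaosMap2 a b)^[n] (((chaosMap2 a b)^[m] (x, y)).1,
          ((chaosMap2 a b)^[m] (x, y)).2) := by
    funext n
    rw [Function.iterate_add_apply]
  rw [this]
  exact hk

/-- boundary case x = 0 -/
lemma case_x0 (ha : 0 < a) (hb0 : 0 < b) (hb1 : b < 1) (y : ℝ) (hy0 : 0 < y) (hy1 : y ≤ 1) :
    Tendsto (fun n : ℕ => (chaosMap2 a b)^[n] ((0:ℝ), y)) atTop (nhds ((0:ℝ), (1:ℝ))) := by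
  set X : ℕ → ℝ := fun n => ((chaosMap2 a b)^[n] ((0:ℝ), y)).1 with hX
  set Y : ℕ → ℝ := fun n => ((chaosMap2 a b)^[n] ((0:ℝ), y)).2 with hY
  have hXs : ∀ n, X (n+1) = G a b (X n) (Y n) := fun n => by
    rw [hX]; simp only [iter_succ]; rfl
  have hYs : ∀ n, Y (n+1) = G a b (Y n) (X n) := fun n => by
    rw [hY]; simp only [iter_succ]; rfl
  have hE0 : exp (a * (0 - b)) < 1 := by
    rw [← exp_zero]; exact exp_lt_exp.2 (by nlinarith)
  have hE0p : 0 < exp (a * (0 - b)) := exp_pos _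
  -- invariant
  have inv : ∀ n, X n = 0 ∧ y ≤ Y n ∧ Y n ≤ 1 := by
    intro n
    induction n with
    | zero => exact ⟨rfl, le_refl _, hy1⟩
    | succ n ih =>
      obtain ⟨h1, h2, h3⟩ := ih
      have hy0' : 0 < Y n := lt_of_lt_of_le hy0 h2
      refine ⟨?_, ?_, ?_⟩
      · rw [hXs, h1, G]; simp
      · refine le_trans h2 ?_
        rw [hYs, h1]
        -- G a b (Y n) 0 ≥ Y n since 0 ≤ b
        have hD : 0 < Y n + (1 - Y n) * exp (a * (0 - b)) :=
          denom_pos hy0'.le h3 (Or.inr hy0')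
        rw [G, le_div_iff₀ hD]
        nlinarith [mul_nonneg (mul_nonneg hy0'.le (by linarith : (0:ℝ) ≤ 1 - Y n)) (by linarith : (0:ℝ) ≤ 1 - exp (a * (0 - b)))]
      · rw [hYs, h1]; exact G_le_one hy0'.le h3
  -- escape: eventually Y n > b
  set c : ℝ := y * (1 - b) * (1 - exp (a * (0 - b))) with hc
  have hcpos : 0 < c := by
    apply mul_pos (mul_pos hy0 (by linarith)) (by linarith)
  have growth : ∀ k, Y k ≤ b → y + k * c ≤ Y k := by
    intro k
    induction k with
    | zero => intro _; simpa using (inv 0).2.1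
    | succ k ih =>
      intro hkb
      obtain ⟨h1, h2, h3⟩ := inv k
      have hy0' : 0 < Y k := lt_of_lt_of_le hy0 h2
      have hstep : Y k ≤ Y (k+1) := by
        rw [hYs, h1]
        have hD : 0 < Y k + (1 - Y k) * exp (a * (0 - b)) :=
          denom_pos hy0'.le h3 (Or.inr hy0')
        rw [G, le_div_iff₀ hD]
        nlinarith [mul_nonneg (mul_nonneg hy0'.le (by linarith [(inv k).2.2] : (0:ℝ) ≤ 1 - Y k)) (by linarith : (0:ℝ) ≤ 1 - exp (a * (0 - b)))]
      have hkb' : Y k ≤ b := le_trans hstep hkb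
      have ihk := ih hkb'
      -- quantitative gain
      have hgain : Y k + c ≤ Y (k+1) := by
        rw [hYs, h1]
        have hD : 0 < Y k + (1 - Y k) * exp (a * (0 - b)) :=
          denom_pos hy0'.le h3 (Or.inr hy0')
        have hDle : Y k + (1 - Y k) * exp (a * (0 - b)) ≤ 1 := by nlinarith
        rw [G, le_div_iff₀ hD, hc]
        have hN : y * (1 - b) * (1 - exp (a * (0 - b)))
            ≤ Y k * (1 - Y k) * (1 - exp (a * (0 - b))) :=
          mul_le_mul_of_nonneg_right
            (mul_le_mul h2 (by linarith) (by linarith) hy0'.le) (by linarith)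
        nlinarith [mul_nonneg (mul_pos (mul_pos hy0 (by linarith : (0:ℝ) < 1 - b))
          (by linarith : (0:ℝ) < 1 - exp (a * (0 - b)))).le
          (by linarith : (0:ℝ) ≤ 1 - (Y k + (1 - Y k) * exp (a * (0 - b))))]
      push_cast
      linarith

  obtain ⟨k, hk⟩ := exists_nat_gt ((b - y) / c)
  have hbk : b < Y k := by
    by_contra hcon
    push_neg at hcon
    have := growth k hcon
    rw [div_lt_iff₀ hcpos] at hk
    linarith
  have r1 : (0:ℝ) ≤ X k := by rw [(inv k).1]
  have r2 : X k < b := by rw [(inv k).1]; exact hb0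
  exact tendsto_of_region ha hb0 hb1 0 y k r1 r2 hbk (inv k).2.2

/-- boundary case y = 1 -/
lemma case_y1 (ha : 0 < a) (hb0 : 0 < b) (hb1 : b < 1) (x : ℝ) (hx0 : 0 ≤ x) (hx1 : x < 1) :
    Tendsto (fun n : ℕ => (chaosMap2 a b)^[n] (x, (1:ℝ))) atTop (nhds ((0:ℝ), (1:ℝ))) := by
  set X : ℕ → ℝ := fun n => ((chaosMap2 a b)^[n] (x, (1:ℝ))).1 with hX
  set Y : ℕ → ℝ := fun n => ((chaosMap2 a b)^[n] (x, (1:ℝ))).2 with hY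
  have hXs : ∀ n, X (n+1) = G a b (X n) (Y n) := fun n => by
    rw [hX]; simp only [iter_succ]; rfl
  have hYs : ∀ n, Y (n+1) = G a b (Y n) (X n) := fun n => by
    rw [hY]; simp only [iter_succ]; rfl
  have hE1 : 1 < exp (a * (1 - b)) :=
    calc (1:ℝ) = exp 0 := exp_zero.symm
      _ < exp (a * (1 - b)) := exp_lt_exp.2 (by nlinarith)
  have hE1p : (0:ℝ) < exp (a * (1 - b)) := exp_pos _
  have inv : ∀ n, Y n = 1 ∧ 0 ≤ X n ∧ X n ≤ x := by
    intro n
    induction n with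
    | zero => exact ⟨rfl, hx0, le_refl x⟩
    | succ n ih =>
      obtain ⟨h1, h2, h3⟩ := ih
      have hx1' : X n ≤ 1 := le_trans h3 hx1.le
      refine ⟨?_, ?_, ?_⟩
      · rw [hYs, h1, G]; norm_num
      · rw [hXs]; exact G_nonneg h2 hx1'
      · refine le_trans ?_ h3
        rw [hXs, h1]
        exact G_le_self h2 hx1' hb1.le ha
  set c : ℝ := b * (1 - x) * (exp (a * (1 - b)) - 1) / exp (a * (1 - b)) with hc
  have hcpos : 0 < c := by
    apply div_pos (mul_pos (mul_pos hb0 (by linarith)) (by linarith)) hE1p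
  have decay : ∀ k, b ≤ X k → X k ≤ x - k * c := by
    intro k
    induction k with
    | zero => intro _; simpa using (inv 0).2.2
    | succ k ih =>
      intro hkb
      obtain ⟨h1, h2, h3⟩ := inv k
      have hx1' : X k ≤ 1 := le_trans h3 hx1.le
      have hstep0 : X (k+1) ≤ X k := by
        rw [hXs, h1]; exact G_le_self h2 hx1' hb1.le ha
      have hkb' : b ≤ X k := le_trans hkb hstep0
      have ihk := ih hkb'
      have hD : 0 < X k + (1 - X k) * exp (a * (1 - b)) := by nlinarith
      have hD1 : 1 ≤ X k + (1 - X k) * exp (a * (1 - b)) := by nlinarith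
      have hDE : X k + (1 - X k) * exp (a * (1 - b)) ≤ exp (a * (1 - b)) := by nlinarith
      have hgain : X (k+1) ≤ X k - c := by
        rw [hXs, h1, G]
        have h1b : (a * ((1:ℝ) - b)) = a * (1 - b) := rfl
        rw [div_le_iff₀ hD]
        have hcE : c * exp (a * (1 - b)) = b * (1 - x) * (exp (a * (1 - b)) - 1) := by
          rw [hc]; field_simp
        have hN : b * (1 - x) * (exp (a * (1 - b)) - 1)
            ≤ X k * (1 - X k) * (exp (a * (1 - b)) - 1) :=
          mul_le_mul_of_nonneg_right
            (mul_le_mul hkb' (by linarith) (by linarith) (by linarith)) (by linarith)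
        nlinarith [mul_le_mul_of_nonneg_left hDE hcpos.le]
      push_cast
      linarith
  obtain ⟨k, hk⟩ := exists_nat_gt ((x - b) / c)
  have hbk : X k < b := by
    by_contra hcon
    push_neg at hcon
    have := decay k hcon
    rw [div_lt_iff₀ hcpos] at hk
    linarith
  have r1 : b < Y k := by rw [(inv k).1]; exact hb1
  have r2 : Y k ≤ 1 := le_of_eq (inv k).1
  exact tendsto_of_region ha hb0 hb1 x 1 k (inv k).2.1 hbk r1 r2

set_option maxHeartbeats 2000000 in
/-- Interior case -/
lemma case_interior (ha : 0 < a) (hb0 : 0 < b) (hb1 : b < 1) (x y : ℝ)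
    (hx0 : 0 < x) (hxy : x < y) (hy1 : y < 1) :
    Tendsto (fun n : ℕ => (chaosMap2 a b)^[n] (x, y)) atTop (nhds ((0:ℝ), (1:ℝ))) := by
  set X : ℕ → ℝ := fun n => ((chaosMap2 a b)^[n] (x, y)).1 with hX
  set Y : ℕ → ℝ := fun n => ((chaosMap2 a b)^[n] (x, y)).2 with hY
  have hXs : ∀ n, X (n+1) = G a b (X n) (Y n) := fun n => by
    rw [hX]; simp only [iter_succ]; rfl
  have hYs : ∀ n, Y (n+1) = G a b (Y n) (X n) := fun n => by
    rw [hY]; simp only [iter_succ]; rfl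
  -- invariant: orbit stays strictly inside the triangle
  have inv : ∀ n, 0 < X n ∧ X n < Y n ∧ Y n < 1 := by
    intro n
    induction n with
    | zero => exact ⟨hx0, hxy, hy1⟩
    | succ n ih =>
      obtain ⟨h1, h2, h3⟩ := ih
      have hxn1 : X n < 1 := h2.trans h3
      have hyn0 : 0 < Y n := h1.trans h2
      have hG1 : 0 < G a b (X n) (Y n) := G_pos h1 hxn1.le
      have hG2 : G a b (Y n) (X n) < 1 := G_lt_one hyn0 h3
      have horder : G a b (X n) (Y n) < G a b (Y n) (X n) := by
        have hx' : 0 < G a b (X n) (Y n) := hG1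
        have hx'' : G a b (X n) (Y n) < 1 := G_lt_one h1 hxn1
        have hy' : 0 < G a b (Y n) (X n) := G_pos hyn0 h3.le
        rw [← lgt_lt_lgt hx' hx'' hy' hG2, lgt_G h1 hxn1, lgt_G hyn0 h3]
        have := (lgt_lt_lgt h1 hxn1 hyn0 h3).2 h2
        nlinarith
      exact ⟨by rw [hXs]; exact hG1, by rw [hXs, hYs]; exact horder, by rw [hYs]; exact hG2⟩
  set g : ℕ → ℝ := fun n => lgt (X n) with hg
  set h : ℕ → ℝ := fun n => lgt (Y n) with hh
  have hX1 : ∀ n, X n < 1 := fun n => (inv n).2.1.trans (inv n).2.2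
  have hY0 : ∀ n, 0 < Y n := fun n => (inv n).1.trans (inv n).2.1
  have hXsig : ∀ n, X n = sig (g n) := fun n => (sig_lgt (inv n).1 (hX1 n)).symm
  have hYsig : ∀ n, Y n = sig (h n) := fun n => (sig_lgt (hY0 n) (inv n).2.2).symm
  have grec : ∀ n, g (n+1) = g n - a * (Y n - b) := fun n => by
    rw [hg]; simp only; rw [hXs, lgt_G (inv n).1 (hX1 n)]
  have hrec : ∀ n, h (n+1) = h n - a * (X n - b) := fun n => by
    rw [hh]; simp only; rw [hYs, lgt_G (hY0 n) (inv n).2.2]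
  set sq : ℕ → ℝ := fun n => h n - g n with hsq
  have srec : ∀ n, sq (n+1) = sq n + a * (Y n - X n) := fun n => by
    rw [hsq]; simp only [grec, hrec]; ring
  have smono : Monotone sq := monotone_nat_of_le_succ (fun n => by
    rw [srec]; nlinarith [(inv n).2.1])
  have hs0 : 0 < sq 0 := by
    have h0 : lgt (X 0) < lgt (Y 0) :=
      (lgt_lt_lgt (inv 0).1 (hX1 0) (hY0 0) (inv 0).2.2).2 (inv 0).2.1
    simpa [hsq, hh, hg, sub_pos] using h0
  -- Step 1 : sq → ∞
  have hstend : Tendsto sq atTop atTop := by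
    rcases tendsto_of_monotone smono with h' | ⟨l, hl⟩
    · exact h'
    exfalso
    have hd0 : Tendsto (fun n => Y n - X n) atTop (nhds 0) := by
      have h1 : Tendsto (fun n => sq (n+1) - sq n) atTop (nhds 0) := by
        simpa using (hl.comp (tendsto_add_atTop_nat 1)).sub hl
      have h2 := h1.div_const a
      have heq : (fun n => Y n - X n) = fun n => (sq (n+1) - sq n) / a := by
        funext n; rw [srec]; field_simp; ring
      rw [heq]
      simpa using h2
    set M : ℝ := |lgt b| + a + 1 with hM
    have hMa : a + 1 ≤ M := by
      rw [hM]; linarith [abs_nonneg (lgt b)]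
    have hMb : lgt b < M := by
      rw [hM]; linarith [le_abs_self (lgt b)]
    have hMb' : -M < lgt b := by
      rw [hM]; linarith [neg_abs_le (lgt b)]
    have dlow : ∀ n, sig (h n) - sig (h n - sq 0) ≤ Y n - X n := by
      intro n
      have h1 : g n ≤ h n - sq 0 := by
        have h2 : sq 0 ≤ sq n := smono (Nat.zero_le n)
        have h3 : sq n = h n - g n := rfl
        linarith [h3 ▸ h2]
      have h4 : sig (g n) ≤ sig (h n - sq 0) := sig_strictMono.monotone h1
      rw [hXsig n, hYsig n] at *
      linarith
    have hpsi : Continuous (fun t : ℝ => sig t - sig (t - sq 0)) :=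
      sig_continuous.sub (sig_continuous.comp (continuous_id.sub continuous_const))
    obtain ⟨t0, ht0mem, ht0min⟩ := (isCompact_Icc (a := -M) (b := M)).exists_isMinOn
      ⟨-M, Set.left_mem_Icc.2 (by linarith)⟩
      (f := fun t : ℝ => sig t - sig (t - sq 0)) hpsi.continuousOn
    set eps : ℝ := sig t0 - sig (t0 - sq 0) with heps_def
    have heps : 0 < eps := sub_pos.2 (sig_strictMono (by linarith))
    obtain ⟨N1, hN1⟩ := eventually_atTop.1 ((tendsto_order.1 hd0).2 eps heps)
    have habs : ∀ n, N1 ≤ n → h n < -M ∨ M < h n := by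
      intro n hn
      by_contra hcon
      push_neg at hcon
      have hmem : h n ∈ Set.Icc (-M) M := ⟨hcon.1, hcon.2⟩
      have hmin := (isMinOn_iff.1 ht0min) (h n) hmem
      have := dlow n
      have := hN1 n hn
      linarith
    have hinc : ∀ n, h n - a ≤ h (n+1) ∧ h (n+1) ≤ h n + a := by
      intro n
      rw [hrec]
      constructor <;> nlinarith [(inv n).1, hX1 n]
    rcases habs N1 (le_refl _) with hB | hA
    · -- h n < -M forever
      have hpers : ∀ k, h (N1 + k) < -M := by
        intro k
        induction k with
        | zero => simpa using hB
        | succ k ih =>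
          have hi := (hinc (N1 + k)).2
          have hup : h (N1 + k + 1) < M := by linarith
          rcases habs (N1 + k + 1) (by omega) with hlt | hgt
          · exact hlt
          · linarith
      have hYup : ∀ k, Y (N1 + k) < sig (-M) := by
        intro k; rw [hYsig]; exact sig_strictMono (hpers k)
      have hsb : sig (-M) < b := (sig_lt_iff hb0 hb1).2 hMb'
      have hdpos : 0 < a * (b - sig (-M)) := mul_pos ha (by linarith)
      have hgrow : ∀ k, h N1 + k * (a * (b - sig (-M))) ≤ h (N1 + k) := by
        intro k
        induction k with
        | zero => simp
        | succ k ih =>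
          have hXb : X (N1 + k) < sig (-M) := lt_trans (inv (N1+k)).2.1 (hYup k)
          have h5 : h (N1 + k + 1) = h (N1 + k) + a * (b - X (N1 + k)) := by
            rw [hrec]; ring
          have h6 : a * (b - sig (-M)) ≤ a * (b - X (N1 + k)) := by nlinarith
          push_cast
          rw [show N1 + (k+1) = N1 + k + 1 from rfl, h5]
          push_cast at ih
          linarith
      obtain ⟨k, hk⟩ := exists_nat_gt ((-M - h N1) / (a * (b - sig (-M))))
      rw [div_lt_iff₀ hdpos] at hk
      have := hgrow k
      have := hpers k
      linarith
    · -- h n > M forever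
      have hpers : ∀ k, M < h (N1 + k) := by
        intro k
        induction k with
        | zero => simpa using hA
        | succ k ih =>
          have hi := (hinc (N1 + k)).1
          have hup : -M < h (N1 + k + 1) := by linarith
          rcases habs (N1 + k + 1) (by omega) with hlt | hgt
          · linarith
          · exact hgt
      have hYlow : ∀ k, sig M < Y (N1 + k) := by
        intro k; rw [hYsig]; exact sig_strictMono (hpers k)
      have hbM : b < sig M := (lt_sig_iff hb0 hb1).2 hMb
      have hdpos : 0 < a * (sig M - b) := mul_pos ha (by linarith)
      have gdecay : ∀ k, g (N1 + k) ≤ g N1 - k * (a * (sig M - b)) := by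
        intro k
        induction k with
        | zero => simp
        | succ k ih =>
          have h5 : g (N1 + k + 1) = g (N1 + k) - a * (Y (N1 + k) - b) := grec _
          have h6 : a * (sig M - b) ≤ a * (Y (N1 + k) - b) := by
            have := hYlow k; nlinarith
          push_cast
          rw [show N1 + (k+1) = N1 + k + 1 from rfl, h5]
          push_cast at ih
          linarith
      have hsigM2 : 0 < sig M / 2 := by linarith [sig_pos M]
      have htb : Tendsto (fun k : ℕ => sig (g N1 - k * (a * (sig M - b)))) atTop (nhds 0) := by
        apply sig_tendsto_atBot.comp
        have h1 : Tendsto (fun k : ℕ => (k:ℝ) * (a * (sig M - b))) atTop atTop := by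
          have := tendsto_natCast_atTop_atTop (R := ℝ)
          exact Tendsto.atTop_mul_const hdpos this
        have h2 : Tendsto (fun k : ℕ => -((k:ℝ) * (a * (sig M - b)))) atTop atBot :=
          tendsto_neg_atTop_atBot.comp h1
        have h3 := tendsto_atBot_add_const_left atTop (g N1) h2
        simpa [sub_eq_add_neg] using h3
      obtain ⟨K1, hK1⟩ := eventually_atTop.1 ((tendsto_order.1 htb).2 (sig M / 2) hsigM2)
      obtain ⟨N2, hN2⟩ := eventually_atTop.1 ((tendsto_order.1 hd0).2 (sig M / 2) hsigM2)
      set k : ℕ := max K1 N2 with hkdef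
      have e1 : sig (g N1 - k * (a * (sig M - b))) < sig M / 2 := hK1 k (le_max_left _ _)
      have e2 : Y (N1 + k) - X (N1 + k) < sig M / 2 :=
        hN2 (N1 + k) (le_trans (le_max_right _ _) (Nat.le_add_left _ _))
      have e3 : X (N1 + k) ≤ sig (g N1 - k * (a * (sig M - b))) := by
        rw [hXsig]; exact sig_strictMono.monotone (gdecay k)
      have e4 : sig M < Y (N1 + k) := hYlow k
      linarith
  -- Step 2 : find m in the trap region
  have hregion : ∃ m, X m < b ∧ b < Y m := by
    classical
    set S : ℝ := a + a * b + 1 with hS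
    have hSa : a < S := by nlinarith
    have hSab : a * b < S := by nlinarith
    have hSpos : 0 < S := by nlinarith
    obtain ⟨N, hN⟩ := eventually_atTop.1 (hstend.eventually_ge_atTop S)
    have hsqeq : ∀ n, sq n = h n - g n := fun n => rfl
    by_cases hcase1 : X N < b ∧ b < Y N
    · exact ⟨N, hcase1⟩
    by_cases hcase2 : b ≤ X N
    · -- phase A : x-coordinate starts above b
      set c : ℝ := a * (sig (lgt b + S) - b) with hc
      have hbb1 : b < sig (lgt b + S) := (lt_sig_iff hb0 hb1).2 (by linarith)
      have hcpos : 0 < c := mul_pos ha (by linarith)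
      have claimA : ∀ k, (∀ j, j ≤ k → b ≤ X (N + j)) → g (N + k) ≤ g N - k * c := by
        intro k
        induction k with
        | zero => intro _; simp
        | succ k ih =>
          intro hall
          have ihk := ih (fun j hj => hall j (le_trans hj (Nat.le_succ k)))
          have hXk : b ≤ X (N + k) := hall k (Nat.le_succ k)
          have hgk : lgt b ≤ g (N + k) := by
            rw [hXsig] at hXk; exact (le_sig_iff hb0 hb1).1 hXk
          have hhk : lgt b + S ≤ h (N + k) := by
            have h1 : S ≤ sq (N + k) := hN _ (Nat.le_add_right _ _)
            have h2 := hsqeq (N + k)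
            linarith
          have hYk : sig (lgt b + S) ≤ Y (N + k) := by
            rw [hYsig]; exact sig_strictMono.monotone hhk
          have h5 : g (N + k + 1) = g (N + k) - a * (Y (N + k) - b) := grec _
          have h6 : c ≤ a * (Y (N + k) - b) := by rw [hc]; nlinarith
          push_cast
          rw [show N + (k+1) = N + k + 1 from rfl, h5]
          push_cast at ihk
          linarith
      have hex : ∃ j, X (N + j) < b := by
        obtain ⟨k, hk⟩ := exists_nat_gt ((g N - lgt b) / c)
        rw [div_lt_iff₀ hcpos] at hk
        by_contra hcon
        push_neg at hcon
        have h1 := claimA k (fun j _ => hcon j)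
        have hgk : g (N + k) < lgt b := by linarith
        have h2 : X (N + k) < b := by
          rw [hXsig]; exact (sig_lt_iff hb0 hb1).2 hgk
        exact absurd h2 (not_lt.2 (hcon _))
      obtain ⟨j0, hj0spec, hj0min⟩ : ∃ j0, X (N + j0) < b ∧ ∀ i, i < j0 → b ≤ X (N + i) :=
        ⟨Nat.find hex, Nat.find_spec hex, fun i hi => not_lt.1 (Nat.find_min hex hi)⟩
      have hj0pos : j0 ≠ 0 := by
        intro h0
        rw [h0] at hj0spec
        simp only [Nat.add_zero] at hj0spec
        exact absurd hj0spec (not_lt.2 hcase2)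
      obtain ⟨j1, hj1⟩ := Nat.exists_eq_succ_of_ne_zero hj0pos
      have hj1lt : b ≤ X (N + j1) := hj0min j1 (by omega)
      have hgj1 : lgt b ≤ g (N + j1) := by
        rw [hXsig] at hj1lt; exact (le_sig_iff hb0 hb1).1 hj1lt
      have hgj0 : lgt b - a ≤ g (N + j0) := by
        have h5 : g (N + j0) = g (N + j1) - a * (Y (N + j1) - b) := by
          rw [hj1, show N + j1.succ = (N + j1) + 1 from rfl]
          exact grec _
        have hYlt : Y (N + j1) - b ≤ 1 := by
          have := (inv (N + j1)).2.2
          linarith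
        have : a * (Y (N + j1) - b) ≤ a := by nlinarith
        linarith
      have hhj0 : lgt b < h (N + j0) := by
        have h1 : S ≤ sq (N + j0) := hN _ (Nat.le_add_right _ _)
        have h2 := hsqeq (N + j0)
        linarith
      refine ⟨N + j0, hj0spec, ?_⟩
      rw [hYsig]
      exact (lt_sig_iff hb0 hb1).2 hhj0
    · -- phase B : y-coordinate starts at or below b
      push_neg at hcase2
      have hYNb : Y N ≤ b := by
        rcases not_and_or.1 hcase1 with h1 | h2
        · exact absurd hcase2 h1
        · exact not_lt.1 h2
      set c : ℝ := a * (b - sig (lgt b - S)) with hc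
      have hb0b : sig (lgt b - S) < b := (sig_lt_iff hb0 hb1).2 (by linarith)
      have hcpos : 0 < c := mul_pos ha (by linarith)
      have claimB : ∀ k, (∀ j, j ≤ k → Y (N + j) ≤ b) → h N + k * c ≤ h (N + k) := by
        intro k
        induction k with
        | zero => intro _; simp
        | succ k ih =>
          intro hall
          have ihk := ih (fun j hj => hall j (le_trans hj (Nat.le_succ k)))
          have hYk : Y (N + k) ≤ b := hall k (Nat.le_succ k)
          have hhk : h (N + k) ≤ lgt b := by
            rw [hYsig] at hYk; exact (sig_le_iff hb0 hb1).1 hYk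
          have hgk : g (N + k) ≤ lgt b - S := by
            have h1 : S ≤ sq (N + k) := hN _ (Nat.le_add_right _ _)
            have h2 := hsqeq (N + k)
            linarith
          have hXk : X (N + k) ≤ sig (lgt b - S) := by
            rw [hXsig]; exact sig_strictMono.monotone hgk
          have h5 : h (N + k + 1) = h (N + k) + a * (b - X (N + k)) := by
            rw [hrec]; ring
          have h6 : c ≤ a * (b - X (N + k)) := by rw [hc]; nlinarith
          push_cast
          rw [show N + (k+1) = N + k + 1 from rfl, h5]
          push_cast at ihk
          linarith
      have hex : ∃ j, b < Y (N + j) := by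
        obtain ⟨k, hk⟩ := exists_nat_gt ((lgt b - h N) / c)
        rw [div_lt_iff₀ hcpos] at hk
        by_contra hcon
        push_neg at hcon
        have h1 := claimB k (fun j _ => hcon _)
        have hhk : lgt b < h (N + k) := by linarith
        have h2 : b < Y (N + k) := by
          rw [hYsig]; exact (lt_sig_iff hb0 hb1).2 hhk
        exact absurd h2 (not_lt.2 (hcon _))
      obtain ⟨j0, hj0spec, hj0min⟩ : ∃ j0, b < Y (N + j0) ∧ ∀ i, i < j0 → Y (N + i) ≤ b :=
        ⟨Nat.find hex, Nat.find_spec hex, fun i hi => not_lt.1 (Nat.find_min hex hi)⟩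
      have hj0pos : j0 ≠ 0 := by
        intro h0
        rw [h0] at hj0spec
        simp only [Nat.add_zero] at hj0spec
        exact absurd hj0spec (not_lt.2 hYNb)
      obtain ⟨j1, hj1⟩ := Nat.exists_eq_succ_of_ne_zero hj0pos
      have hj1lt : Y (N + j1) ≤ b := hj0min j1 (by omega)
      have hhj1 : h (N + j1) ≤ lgt b := by
        rw [hYsig] at hj1lt; exact (sig_le_iff hb0 hb1).1 hj1lt
      have hgj1 : g (N + j1) ≤ lgt b - S := by
        have h1 : S ≤ sq (N + j1) := hN _ (Nat.le_add_right _ _)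
        have h2 := hsqeq (N + j1)
        linarith
      have hgj0 : g (N + j0) < lgt b := by
        have h5 : g (N + j0) = g (N + j1) - a * (Y (N + j1) - b) := by
          rw [hj1, show N + j1.succ = (N + j1) + 1 from rfl]
          exact grec _
        have hY0' : 0 < Y (N + j1) := hY0 _
        have : -(a * (Y (N + j1) - b)) ≤ a * b := by nlinarith
        linarith
      refine ⟨N + j0, ?_, hj0spec⟩
      rw [hXsig]
      exact (sig_lt_iff hb0 hb1).2 hgj0
  obtain ⟨m, hm1, hm2⟩ := hregion
  exact tendsto_of_region ha hb0 hb1 x y m (inv m).1.le hm1 hm2 (inv m).2.2.le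


end ChaosAux

/-- For every `a > 0` and `b ∈ (0,1)`, the trajectory of every point
`(x,y) ∈ [0,1]²` with `x < y` (above the diagonal) converges to `(0,1)`. -/
theorem stmt_19 (a b : ℝ) (ha : 0 < a) (hb : b ∈ Set.Ioo (0 : ℝ) 1)
    (x y : ℝ) (hx0 : 0 ≤ x) (hxy : x < y) (hy1 : y ≤ 1) :
    Filter.Tendsto (fun n : ℕ => (chaosMap2 a b)^[n] (x, y))
      Filter.atTop (nhds ((0 : ℝ), (1 : ℝ))) := by
  obtain ⟨hb0, hb1⟩ := hb
  rcases eq_or_lt_of_le hx0 with hx | hx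
  · rw [← hx]
    exact ChaosAux.case_x0 ha hb0 hb1 y (hx ▸ hxy) hy1
  rcases eq_or_lt_of_le hy1 with hy | hy
  · rw [hy]
    exact ChaosAux.case_y1 ha hb0 hb1 x hx0 (hy ▸ hxy)
  exact ChaosAux.case_interior ha hb0 hb1 x y hx hxy hy
end
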